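/- arXiv:2502.19408 — 3 statements merged into one kernel-verified Lean document; each statement's English description precedes it below -/
import Mathlib

section
/- Let f(x) = ∑_{k≥−1} f_k x^k be a formal Laurent series with complex coefficients having at most a simple pole at x = 0 and with f_{−1} ≠ 0. Then the series g(z) := ∑_{k≥1} (1/k)·([x^{−1}] f^k)·z^{−k} lies in z^{−1}·ℂ⟦z^{−1}⟧ with leading coefficient f_{−1} ≠ 0, and it is the unique element of ℂ⟦z^{−1}⟧ satisfying f(g(z)) = z. Moreover, a series f of the given form is uniquely determined by its compositional inverse g. -/
set_option linter.unusedSectionVars false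
set_option linter.unusedVariables false
set_option linter.unusedTactic false
set_option linter.unreachableTactic false
set_option maxHeartbeats 1000000


/-- The coefficient of `x^n` in the substitution `f(g)` of a Laurent series `g` into a
Laurent series `f = ∑_{k≥−1} f_k x^k` with at most a simple pole:
`[x^n] f(g) = f_{−1}·[x^n](g^{−1}) + ∑_{k=0}^{n} f_k·[x^n](g^k)`.  When `g` has vanishing
coefficients in degrees `≤ 0` the truncation of the sum at `k = n` is valid, since then
`g^k` has order `≥ k`, so this is the honest coefficient of the (coefficientwise
convergent) substitution `f(g) = f_{−1}·g^{−1} + ∑_{k≥0} f_k·g^k`. -/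
noncomputable def laurentSubstCoeff (F g : LaurentSeries ℂ) (n : ℤ) : ℂ :=
  F.coeff (-1) * (g⁻¹).coeff n +
    ∑ k ∈ Finset.Icc (0 : ℤ) n, F.coeff k * (g ^ k.toNat).coeff n

open HahnSeries Finset

namespace LagrangeAux

noncomputable section

abbrev L := LaurentSeries ℂ

/-- coefficients vanish below `m` -/
def P (m : ℤ) (f : L) : Prop := ∀ n < m, f.coeff n = 0

lemma P.mono {m m' : ℤ} {f : L} (h : P m f) (hm : m' ≤ m) : P m' f :=
  fun n hn => h n (lt_of_lt_of_le hn hm)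

lemma P.mul {s t : ℤ} {u v : L} (hu : P s u) (hv : P t v) : P (s + t) (u * v) := by
  intro n hn
  rw [HahnSeries.coeff_mul]
  refine Finset.sum_eq_zero fun ij hij => ?_
  rw [Finset.mem_addAntidiagonal] at hij
  obtain ⟨h1, h2, h3⟩ := hij
  by_contra hne
  have hi : s ≤ ij.1 := le_of_not_gt fun hc => h1 (hu _ hc)
  have hj : t ≤ ij.2 := le_of_not_gt fun hc => h2 (hv _ hc)
  omega

lemma P.pow {s : ℤ} {u : L} (hu : P s u) (k : ℕ) : P (k * s) (u ^ k) := by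
  induction k with
  | zero => intro n hn; simp only [pow_zero, HahnSeries.coeff_one]
            rw [if_neg]; omega
  | succ k ih =>
      have := ih.mul hu
      rw [pow_succ]
      have he : ((k:ℤ)+1) * s = (k:ℤ) * s + s := by ring
      rw [show ((k+1 : ℕ) : ℤ) = (k:ℤ)+1 by push_cast; ring, he]
      exact this

lemma P.zero_pow {u : L} (hu : P 0 u) (k : ℕ) : P 0 (u ^ k) := by
  simpa using hu.pow k

lemma P.coeff0_mul {u v : L} (hu : P 0 u) (hv : P 0 v) :
    (u * v).coeff 0 = u.coeff 0 * v.coeff 0 := by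
  rw [HahnSeries.coeff_mul]
  rw [Finset.sum_eq_single ((0:ℤ),(0:ℤ))]
  · intro b hb hne
    rw [Finset.mem_addAntidiagonal] at hb
    obtain ⟨h1, h2, h3⟩ := hb
    have hi : (0:ℤ) ≤ b.1 := le_of_not_gt fun hc => h1 (hu _ hc)
    have hj : (0:ℤ) ≤ b.2 := le_of_not_gt fun hc => h2 (hv _ hc)
    exfalso; apply hne
    have : b.1 = 0 ∧ b.2 = 0 := by omega
    exact Prod.ext this.1 this.2
  · intro hnotmem
    rw [Finset.mem_addAntidiagonal] at hnotmem
    push_neg at hnotmem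
    by_cases h0 : u.coeff 0 = 0
    · rw [h0, zero_mul]
    by_cases h0' : v.coeff 0 = 0
    · rw [h0', mul_zero]
    exact absurd (add_zero (0:ℤ)) (hnotmem h0 h0')

/-! ### The Euler operator -/

/-- The Euler operator `E f = x f'`, i.e. `(E f)_n = n f_n`. -/
def E (f : L) : L :=
  ⟨fun n => (n : ℂ) * f.coeff n, f.isPWO_support'.mono (by
    intro n hn
    simp only [Function.mem_support, ne_eq] at hn ⊢
    intro h
    exact hn (by rw [h, mul_zero]))⟩

@[simp] lemma E_coeff (f : L) (n : ℤ) : (E f).coeff n = (n : ℂ) * f.coeff n := rfl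

lemma E_support (f : L) : (E f).support ⊆ f.support := by
  intro n hn
  simp only [HahnSeries.mem_support, E_coeff, ne_eq] at hn ⊢
  intro h; exact hn (by rw [h, mul_zero])

lemma E_one : E (1 : L) = 0 := by
  ext n
  simp only [E_coeff, HahnSeries.coeff_one, HahnSeries.coeff_zero]
  by_cases h : n = 0 <;> simp [h]

lemma E_single (d : ℤ) (c : ℂ) : E (single d c) = single d ((d : ℂ) * c) := by
  ext n
  simp only [E_coeff, HahnSeries.coeff_single]
  by_cases h : n = d <;> simp [h]

lemma E_mul (u v : L) : E (u * v) = E u * v + u * E v := by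
  ext n
  rw [HahnSeries.coeff_add, E_coeff, HahnSeries.coeff_mul,
    HahnSeries.coeff_mul_left' u.isPWO_support (E_support u),
    HahnSeries.coeff_mul_right' v.isPWO_support (E_support v),
    ← Finset.sum_add_distrib, Finset.mul_sum]
  refine Finset.sum_congr rfl fun ij hij => ?_
  rw [Finset.mem_addAntidiagonal] at hij
  obtain ⟨h1, h2, h3⟩ := hij
  rw [E_coeff, E_coeff, ← h3]
  push_cast
  ring

lemma E_pow (u : L) (k : ℕ) : E (u ^ (k+1)) = HahnSeries.C ((k:ℂ)+1) * (u ^ k * E u) := by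
  induction k with
  | zero => simp [E_mul]
  | succ k ih =>
      rw [pow_succ, E_mul, ih, pow_succ]
      push_cast [map_add, map_one]
      ring

lemma E_inv (u : L) (hu : u ≠ 0) : E u⁻¹ = -(u⁻¹ * u⁻¹ * E u) := by
  have h := E_mul u u⁻¹
  rw [mul_inv_cancel₀ hu, E_one] at h
  have h2 := congrArg (fun x => u⁻¹ * x) h
  simp only [mul_zero, mul_add] at h2
  rw [show u⁻¹ * (u * E u⁻¹) = (u⁻¹ * u) * E u⁻¹ by ring, inv_mul_cancel₀ hu, one_mul] at h2
  linear_combination -h2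

lemma E_zpow (u : L) (hu : u ≠ 0) (k : ℤ) :
    E (u ^ k) = HahnSeries.C (k : ℂ) * (u ^ (k-1) * E u) := by
  induction k using Int.rec with
  | ofNat m =>
      cases m with
      | zero => simp [E_one]
      | succ m =>
          have h1 : (Int.ofNat (m+1)) - 1 = ((m:ℕ) : ℤ) := by
            simp [Int.ofNat_eq_natCast]
          rw [h1, show (Int.ofNat (m+1)) = ((m+1 : ℕ) : ℤ) from rfl, zpow_natCast,
            zpow_natCast, E_pow]
          norm_num
  | negSucc m =>
      rw [zpow_negSucc, ← inv_pow, E_pow (u⁻¹) m, E_inv u hu]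
      have h1 : u ^ (Int.negSucc m - 1) = (u⁻¹) ^ (m + 2) := by
        rw [show Int.negSucc m - 1 = -(((m+2:ℕ)) : ℤ) by rw [Int.negSucc_eq]; push_cast; ring,
          zpow_neg, zpow_natCast, inv_pow]
      rw [h1, show ((Int.negSucc m : ℂ)) = -((m:ℂ)+1) by rw [Int.cast_negSucc]; push_cast; ring,
        map_neg]
      ring

lemma E_P {f : L} (h : P 0 f) : P 1 (E f) := by
  intro n hn
  rcases lt_or_eq_of_le (show n ≤ 0 by omega) with h' | h'
  · rw [E_coeff, h n h', mul_zero]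
  · rw [E_coeff, h']; simp



lemma isPWO_of_bddBelow (s : Set ℤ) (h : BddBelow s) : s.IsPWO :=
  Set.IsWF.isPWO h.wellFoundedOn_lt


lemma P.add {m : ℤ} {u v : L} (hu : P m u) (hv : P m v) : P m (u + v) := by
  intro n hn; rw [HahnSeries.coeff_add, hu n hn, hv n hn, add_zero]

lemma P.nat_pow {u : L} (hu : P 1 u) (k : ℕ) : P k (u ^ k) := by
  have := hu.pow k
  simpa using this

lemma C_mul_coeff (c : ℂ) (x : L) (n : ℤ) : (HahnSeries.C c * x).coeff n = c * x.coeff n := by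
  rw [HahnSeries.C_mul_eq_smul, HahnSeries.coeff_smul]; rfl

lemma P_orderTop {h : L} (hP1 : P 1 h) : 0 < h.orderTop := by
  by_cases h0 : h = 0
  · rw [h0, HahnSeries.orderTop_zero]; exact WithTop.top_pos
  · rw [HahnSeries.zero_lt_orderTop_iff h0]
    by_contra hlt
    push_neg at hlt
    exact (HahnSeries.coeff_order_eq_zero.not.2 h0) (hP1 _ (by omega))

/-- support of C c * x is inside that of x -/
lemma C_mul_support (c : ℂ) (x : L) : (HahnSeries.C c * x).support ⊆ x.support := by
  intro n hn
  simp only [HahnSeries.mem_support, C_mul_coeff, ne_eq] at hn ⊢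
  exact fun hc => hn (by rw [hc, mul_zero])

/-- the `ℕ`-indexed family `k ↦ F_{k-1} h^k` -/
def nf (F h : L) (hx : 0 < h.orderTop) : SummableFamily ℤ ℂ ℕ where
  toFun k := HahnSeries.C (F.coeff ((k:ℤ)-1)) * h ^ k
  isPWO_iUnion_support' := by
    apply ((SummableFamily.powers h).isPWO_iUnion_support).mono
    apply Set.iUnion_mono
    intro k
    rw [SummableFamily.coe_powers hx]
    exact C_mul_support _ _
  finite_co_support' n := by
    apply ((SummableFamily.powers h).finite_co_support n).subset
    intro k hk
    have hk' : (HahnSeries.C (F.coeff ((k:ℤ)-1)) * h ^ k).coeff n ≠ 0 := hk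
    rw [C_mul_coeff] at hk'
    have : (h ^ k).coeff n ≠ 0 := right_ne_zero_of_mul hk'
    show ((SummableFamily.powers h) k).coeff n ≠ 0
    rw [SummableFamily.coe_powers hx]
    exact this

def Psi (F h : L) : L :=
  if hx : 0 < h.orderTop then single (1:ℤ) 1 * (nf F h hx).hsum else 0

lemma Psi_coeff (F h : L) (hx : 0 < h.orderTop) (n : ℤ) :
    (Psi F h).coeff n = ∑ᶠ k : ℕ, F.coeff ((k:ℤ)-1) * (h ^ k).coeff (n-1) := by
  rw [Psi, dif_pos hx]
  have := HahnSeries.coeff_single_mul_add (r := (1:ℂ)) (x := (nf F h hx).hsum)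
    (a := n - 1) (b := (1:ℤ))
  rw [sub_add_cancel, one_mul] at this
  rw [this, SummableFamily.coeff_hsum]
  exact finsum_congr fun k => C_mul_coeff _ _ _

lemma Psi_P (F h : L) (hP1 : P 1 h) : P 1 (Psi F h) := by
  intro n hn
  rw [Psi_coeff F h (P_orderTop hP1)]
  apply finsum_eq_zero_of_forall_eq_zero
  intro k
  cases k with
  | zero => rw [pow_zero, HahnSeries.coeff_one, if_neg (by omega), mul_zero]
  | succ k =>
      rw [(hP1.nat_pow (k+1)) (n-1) (by push_cast; omega), mul_zero]

lemma Psi_loc (F h h' : L) (hP1 : P 1 h) (hP1' : P 1 h') (m : ℤ)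
    (hag : ∀ j ≤ m, h.coeff j = h'.coeff j) :
    ∀ j ≤ m + 1, (Psi F h).coeff j = (Psi F h').coeff j := by
  have key : ∀ k : ℕ, P (m+1) (h ^ k - h' ^ k) := by
    intro k
    induction k with
    | zero => intro n hn; simp
    | succ k ih =>
        have heq : h ^ (k+1) - h' ^ (k+1) = h ^ k * (h - h') + (h ^ k - h' ^ k) * h' := by ring
        rw [heq]
        apply P.add
        · have h2 : P (m+1) (h - h') := by
            intro n hn
            rw [HahnSeries.coeff_sub, hag n (by omega), sub_self]
          have := (hP1.mono (by omega : (0:ℤ) ≤ 1)).zero_pow k |>.mul h2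
          simpa using this
        · have := ih.mul (hP1'.mono (by omega : (0:ℤ) ≤ 1))
          simpa using this
  intro j hj
  rw [Psi_coeff F h (P_orderTop hP1), Psi_coeff F h' (P_orderTop hP1')]
  apply finsum_congr
  intro k
  have : (h ^ k).coeff (j-1) = (h' ^ k).coeff (j-1) := by
    have := key k (j-1) (by omega)
    rw [HahnSeries.coeff_sub] at this
    exact sub_eq_zero.mp this
  rw [this]


section Std
variable {g : L} {a : ℂ} (ha : a ≠ 0) (hP : P 1 g) (h1 : g.coeff 1 = a)

include ha h1 in
lemma g_ne : g ≠ 0 := HahnSeries.ne_zero_of_coeff_ne_zero (h1 ▸ ha)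

/-- normalized unit part -/
def W (g : L) (a : ℂ) : L := single (-1 : ℤ) a⁻¹ * g

lemma W_coeff (g : L) (a : ℂ) (n : ℤ) : (W g a).coeff n = a⁻¹ * g.coeff (n+1) := by
  have := HahnSeries.coeff_single_mul_add (r := a⁻¹) (x := g) (a := n+1) (b := (-1 : ℤ))
  simpa [W] using this

include hP in
lemma W_P : P 0 (W g a) := by
  intro n hn
  rw [W_coeff]
  rw [hP (n+1) (by omega), mul_zero]

include h1 ha in
lemma W_coeff0 : (W g a).coeff 0 = 1 := by
  rw [W_coeff, zero_add, h1, inv_mul_cancel₀ ha]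

include h1 ha in
lemma W_ne : W g a ≠ 0 :=
  HahnSeries.ne_zero_of_coeff_ne_zero (by rw [W_coeff0 ha h1]; exact one_ne_zero)

include ha in
lemma g_eq_single_mul : g = single (1:ℤ) a * W g a := by
  rw [W, ← mul_assoc, HahnSeries.single_mul_single, add_neg_cancel, mul_inv_cancel₀ ha,
    HahnSeries.single_zero_one, one_mul]

-- ℕ-power facts for P-0 series with constant term 1
lemma natUnit_pow {v : L} (hv : P 0 v) (hv0 : v.coeff 0 = 1) (k : ℕ) :
    P 0 (v ^ k) ∧ (v ^ k).coeff 0 = 1 := by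
  induction k with
  | zero => constructor
            · intro n hn; rw [pow_zero, HahnSeries.coeff_one, if_neg (by omega)]
            · rw [pow_zero, HahnSeries.coeff_one, if_pos rfl]
  | succ k ih =>
      rw [pow_succ]
      refine ⟨by simpa using ih.1.mul hv, ?_⟩
      rw [P.coeff0_mul ih.1 hv, ih.2, hv0, one_mul]

include ha h1 hP in
lemma W_inv_P : P 0 (W g a)⁻¹ ∧ ((W g a)⁻¹).coeff 0 = 1 := by
  have hw := W_ne ha h1
  have hworder : (W g a).order = 0 := by
    apply le_antisymm
    · exact HahnSeries.order_le_of_coeff_ne_zero (by rw [W_coeff0 ha h1]; exact one_ne_zero)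
    · by_contra hlt
      push_neg at hlt
      exact (HahnSeries.coeff_order_eq_zero.not.2 hw) (W_P hP _ hlt)
  have hwi : (W g a)⁻¹ ≠ 0 := inv_ne_zero hw
  have horder : ((W g a)⁻¹).order = 0 := by
    have := HahnSeries.order_mul (x := W g a) (y := (W g a)⁻¹) hw hwi
    rw [mul_inv_cancel₀ hw, HahnSeries.order_one, hworder, zero_add] at this
    omega
  have hp : P 0 (W g a)⁻¹ := by
    intro n hn
    apply HahnSeries.coeff_eq_zero_of_lt_order
    rw [horder]; exact hn
  refine ⟨hp, ?_⟩
  have := P.coeff0_mul (W_P (a := a) hP) hp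
  rw [mul_inv_cancel₀ hw, HahnSeries.coeff_one, if_pos rfl, W_coeff0 ha h1, one_mul] at this
  exact this.symm

include ha h1 hP in
lemma W_zpow (k : ℤ) : P 0 ((W g a) ^ k) ∧ ((W g a) ^ k).coeff 0 = 1 := by
  induction k using Int.rec with
  | ofNat m => rw [Int.ofNat_eq_natCast, zpow_natCast]
               exact natUnit_pow (W_P hP) (W_coeff0 ha h1) m
  | negSucc m =>
      rw [zpow_negSucc, ← inv_pow]
      exact natUnit_pow (W_inv_P ha hP h1).1 (W_inv_P ha hP h1).2 (m+1)

include ha in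
lemma single_one_zpow (k : ℤ) : (single (1:ℤ) a) ^ k = single k (a ^ k) := by
  have hC : (single (1:ℤ) a) = HahnSeries.C a * single (1:ℤ) (1:ℂ) := by
    rw [HahnSeries.C, RingHom.coe_mk, MonoidHom.coe_mk, OneHom.coe_mk]
    rw [HahnSeries.single_mul_single, zero_add, mul_one]
  rw [hC, mul_zpow, ← map_zpow₀, ← RatFunc.single_zpow]
  rw [HahnSeries.C, RingHom.coe_mk, MonoidHom.coe_mk, OneHom.coe_mk]
  rw [HahnSeries.single_mul_single, zero_add, mul_one]

include ha h1 hP in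
lemma g_zpow_coeff (k n : ℤ) : (g ^ k).coeff n = a ^ k * ((W g a) ^ k).coeff (n - k) := by
  have hgw : g ^ k = single k (a ^ k) * (W g a) ^ k := by
    conv_lhs => rw [g_eq_single_mul (g := g) ha]
    rw [mul_zpow, single_one_zpow ha]
  rw [hgw]
  have := HahnSeries.coeff_single_mul_add (r := a ^ k) (x := (W g a) ^ k) (a := n - k) (b := k)
  simpa using this


end Std

section Std
variable {g : L} {a : ℂ} (ha : a ≠ 0) (hP : P 1 g) (h1 : g.coeff 1 = a)

include ha hP h1 in
lemma g_zpow_P (k : ℤ) : P k (g ^ k) := by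
  intro n hn
  rw [g_zpow_coeff ha hP h1, (W_zpow ha hP h1 k).1 (n - k) (by omega), mul_zero]

include ha hP h1 in
lemma g_zpow_coeff_self (k : ℤ) : (g ^ k).coeff k = a ^ k := by
  rw [g_zpow_coeff ha hP h1, sub_self, (W_zpow ha hP h1 k).2, mul_one]

include ha hP h1 in
lemma resKey (k : ℤ) : (g ^ k * E g).coeff 0 = if k = -1 then 1 else 0 := by
  have hgne : g ≠ 0 := g_ne ha h1
  by_cases hk : k = -1
  · subst hk
    have hwne := W_ne ha h1
    have hss : single (-1 : ℤ) a⁻¹ * single (1:ℤ) a = 1 := by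
      rw [HahnSeries.single_mul_single, neg_add_cancel, inv_mul_cancel₀ ha,
        HahnSeries.single_zero_one]
    have hginv : g⁻¹ = single (-1 : ℤ) a⁻¹ * (W g a)⁻¹ := by
      conv_lhs => rw [g_eq_single_mul (g := g) ha]
      rw [mul_inv, HahnSeries.inv_single]
    have hEg : E g = single (1:ℤ) a * W g a + single (1:ℤ) a * E (W g a) := by
      conv_lhs => rw [g_eq_single_mul (g := g) ha]
      rw [E_mul, E_single]
      norm_num
    have key : g ^ (-1 : ℤ) * E g = 1 + (W g a)⁻¹ * E (W g a) := by
      rw [zpow_neg_one, hginv, hEg]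
      have hWW : (W g a)⁻¹ * W g a = 1 := inv_mul_cancel₀ hwne
      calc single (-1:ℤ) a⁻¹ * (W g a)⁻¹ * (single (1:ℤ) a * W g a + single (1:ℤ) a * E (W g a))
          = (single (-1:ℤ) a⁻¹ * single (1:ℤ) a) * ((W g a)⁻¹ * W g a)
            + (single (-1:ℤ) a⁻¹ * single (1:ℤ) a) * ((W g a)⁻¹ * E (W g a)) := by ring
        _ = 1 + (W g a)⁻¹ * E (W g a) := by rw [hss, hWW]; ring
    rw [key, if_pos rfl, HahnSeries.coeff_add, HahnSeries.coeff_one, if_pos rfl]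
    have hp : P 1 ((W g a)⁻¹ * E (W g a)) := by
      have := ((W_inv_P ha hP h1).1).mul (E_P (W_P (a := a) hP))
      simpa using this
    rw [hp 0 (by omega), add_zero]
  · rw [if_neg hk]
    have h := E_zpow g hgne (k+1)
    rw [add_sub_cancel_right] at h
    have hc := congrArg (fun x => x.coeff 0) h
    simp only [C_mul_coeff, E_coeff] at hc
    push_cast at hc
    rw [zero_mul] at hc
    have hne : ((k:ℂ) + 1) ≠ 0 := by
      intro hcon
      apply hk
      have : ((k + 1 : ℤ) : ℂ) = 0 := by push_cast; linear_combination hcon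
      have := Int.cast_eq_zero.mp this
      omega
    field_simp at hc
    exact (mul_eq_zero.mp hc.symm).resolve_left hne

/-- the summable family `k ↦ h_k · g^k`, `k ∈ ℤ`. -/
def zf (h : L) (g : L) (a : ℂ) (ha : a ≠ 0) (hP : P 1 g) (h1 : g.coeff 1 = a) :
    SummableFamily ℤ ℂ ℤ where
  toFun k := HahnSeries.C (h.coeff k) * g ^ k
  isPWO_iUnion_support' := by
    apply isPWO_of_bddBelow
    refine ⟨h.order, fun n hn => ?_⟩
    simp only [Set.mem_iUnion, HahnSeries.mem_support] at hn
    obtain ⟨k, hk⟩ := hn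
    rw [C_mul_coeff] at hk
    have hk1 : h.coeff k ≠ 0 := left_ne_zero_of_mul hk
    have hk2 : (g ^ k).coeff n ≠ 0 := right_ne_zero_of_mul hk
    have hko : h.order ≤ k := HahnSeries.order_le_of_coeff_ne_zero hk1
    have hkn : k ≤ n := le_of_not_gt fun hc => hk2 (g_zpow_P ha hP h1 k n hc)
    exact le_trans hko hkn
  finite_co_support' n := by
    apply Set.Finite.subset (Set.finite_Icc h.order n)
    intro k hk
    have hk' : (HahnSeries.C (h.coeff k) * g ^ k).coeff n ≠ 0 := hk
    rw [C_mul_coeff] at hk'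
    have hk1 : h.coeff k ≠ 0 := left_ne_zero_of_mul hk'
    have hk2 : (g ^ k).coeff n ≠ 0 := right_ne_zero_of_mul hk'
    constructor
    · exact HahnSeries.order_le_of_coeff_ne_zero hk1
    · exact le_of_not_gt fun hc => hk2 (g_zpow_P ha hP h1 k n hc)

/-- the substitution `h ∘ g = ∑ₖ h_k g^k`. -/
def comp (h : L) (g : L) (a : ℂ) (ha : a ≠ 0) (hP : P 1 g) (h1 : g.coeff 1 = a) : L :=
  (zf h g a ha hP h1).hsum

lemma comp_coeff (h : L) (n : ℤ) :
    (comp h g a ha hP h1).coeff n = ∑ᶠ k : ℤ, h.coeff k * (g ^ k).coeff n := by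
  rw [comp, SummableFamily.coeff_hsum]
  exact finsum_congr fun k => C_mul_coeff _ _ _

lemma comp_add (h h' : L) :
    comp (h + h') g a ha hP h1 = comp h g a ha hP h1 + comp h' g a ha hP h1 := by
  rw [comp, comp, comp, ← SummableFamily.hsum_add]
  congr 1
  apply SummableFamily.ext
  intro k
  show HahnSeries.C ((h + h').coeff k) * g ^ k = _
  rw [SummableFamily.add_apply]
  show _ = HahnSeries.C (h.coeff k) * g ^ k + HahnSeries.C (h'.coeff k) * g ^ k
  rw [HahnSeries.coeff_add, map_add]
  ring

lemma comp_single (d : ℤ) (c : ℂ) :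
    comp (single d c) g a ha hP h1 = HahnSeries.C c * g ^ d := by
  ext n
  rw [comp_coeff ha hP h1, C_mul_coeff]
  rw [finsum_eq_single _ d]
  · rw [HahnSeries.coeff_single_same]
  · intro k hk
    rw [HahnSeries.coeff_single_of_ne hk, zero_mul]

lemma comp_mul (h h' : L) :
    comp (h * h') g a ha hP h1 = comp h g a ha hP h1 * comp h' g a ha hP h1 := by
  have hgne : g ≠ 0 := g_ne ha h1
  have hrhs : comp h g a ha hP h1 * comp h' g a ha hP h1
      = (SummableFamily.smul (zf h g a ha hP h1) (zf h' g a ha hP h1)).hsum := by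
    rw [SummableFamily.smul_hsum, HahnSeries.of_symm_smul_of_eq_mul]; rfl
  rw [hrhs]
  ext n
  rw [comp_coeff ha hP h1, SummableFamily.coeff_hsum]
  -- the common function on pairs
  set f : ℤ × ℤ → ℂ := fun p => h.coeff p.1 * h'.coeff p.2 * (g ^ (p.1 + p.2)).coeff n with hf
  have hterm : ∀ p : ℤ × ℤ,
      ((SummableFamily.smul (zf h g a ha hP h1) (zf h' g a ha hP h1)) p).coeff n = f p := by
    intro p
    show ((HahnModule.of ℂ).symm
      ((HahnSeries.C (h.coeff p.1) * g ^ p.1) • (HahnModule.of ℂ) (HahnSeries.C (h'.coeff p.2) * g ^ p.2))).coeff n = _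
    rw [HahnSeries.of_symm_smul_of_eq_mul]
    have : HahnSeries.C (h.coeff p.1) * g ^ p.1 * (HahnSeries.C (h'.coeff p.2) * g ^ p.2)
        = HahnSeries.C (h.coeff p.1 * h'.coeff p.2) * g ^ (p.1 + p.2) := by
      rw [zpow_add₀ hgne, map_mul]; ring
    rw [this, C_mul_coeff]
  rw [finsum_congr hterm]
  -- finite support of f
  have hfin : (Function.support f).Finite := by
    apply Set.Finite.subset ((Set.finite_Icc h.order (n - h'.order)).prod
      (Set.finite_Icc h'.order (n - h.order)))
    intro p hp
    simp only [Function.mem_support, hf, ne_eq] at hp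
    have e1 : h.coeff p.1 ≠ 0 := fun hc => hp (by rw [hc]; ring)
    have e2 : h'.coeff p.2 ≠ 0 := fun hc => hp (by rw [hc]; ring)
    have e3 : (g ^ (p.1+p.2)).coeff n ≠ 0 := fun hc => hp (by rw [hc]; ring)
    have o1 : h.order ≤ p.1 := HahnSeries.order_le_of_coeff_ne_zero e1
    have o2 : h'.order ≤ p.2 := HahnSeries.order_le_of_coeff_ne_zero e2
    have o3 : p.1 + p.2 ≤ n := le_of_not_gt fun hc => e3 (g_zpow_P ha hP h1 _ n hc)
    constructor <;> constructor <;> omega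
  set Sf := hfin.toFinset with hSf
  set M : Finset ℤ := Sf.image (fun p => p.1 + p.2) with hM
  set AD : ℤ → Finset (ℤ × ℤ) :=
    fun m => Finset.antidiagonal h.isPWO_support h'.isPWO_support m with hAD
  have hADmem : ∀ m (q : ℤ × ℤ), q ∈ AD m ↔
      h.coeff q.1 ≠ 0 ∧ h'.coeff q.2 ≠ 0 ∧ q.1 + q.2 = m := by
    intro m q
    rw [hAD, Finset.mem_addAntidiagonal]
    rfl
  -- LHS as sum over M
  have hsupp : (Function.support fun m => (h * h').coeff m * (g ^ m).coeff n) ⊆ ↑M := by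
    intro m hm
    simp only [Function.mem_support, ne_eq] at hm
    have e1 : (h * h').coeff m ≠ 0 := left_ne_zero_of_mul hm
    have e3 : (g ^ m).coeff n ≠ 0 := right_ne_zero_of_mul hm
    rw [HahnSeries.coeff_mul] at e1
    obtain ⟨q, hq, hqne⟩ := Finset.exists_ne_zero_of_sum_ne_zero e1
    rw [Finset.mem_addAntidiagonal] at hq
    simp only [hM, Finset.coe_image, Set.mem_image, Finset.mem_coe]
    refine ⟨q, ?_, hq.2.2⟩
    rw [hSf, Set.Finite.mem_toFinset, Function.mem_support, hf]
    simp only [ne_eq]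
    rw [hq.2.2]
    exact fun hc => (mul_eq_zero.mp hc).elim (fun h0 => hqne (by rw [h0])) e3
  rw [finsum_eq_finset_sum_of_support_subset _ hsupp]
  have hstep : ∀ m ∈ M, (h * h').coeff m * (g ^ m).coeff n = ∑ q ∈ AD m, f q := by
    intro m _
    rw [HahnSeries.coeff_mul, Finset.sum_mul]
    refine Finset.sum_congr rfl fun q hq => ?_
    rw [hADmem] at hq
    rw [hf]
    simp only
    rw [hq.2.2]
  rw [Finset.sum_congr rfl hstep]
  rw [← Finset.sum_biUnion (by
    intro m1 hm1 m2 hm2 hne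
    simp only [Finset.disjoint_left]
    intro q hq1 hq2
    rw [hADmem] at hq1 hq2
    exact hne (by rw [← hq1.2.2, hq2.2.2]))]
  -- now compare with ∑ᶠ p, f p
  rw [finsum_eq_finset_sum_of_support_subset f (s := Sf) (by
    rw [hSf]; exact fun p hp => hfin.mem_toFinset.mpr hp)]
  set U := Sf ∪ M.biUnion AD with hU
  have e1 : ∑ q ∈ M.biUnion AD, f q = ∑ q ∈ U, f q := by
    apply Finset.sum_subset Finset.subset_union_right
    intro p _ hnp
    by_contra hfp
    apply hnp
    have e1' : h.coeff p.1 ≠ 0 := fun hc => hfp (by rw [hf]; simp only; rw [hc]; ring)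
    have e2' : h'.coeff p.2 ≠ 0 := fun hc => hfp (by rw [hf]; simp only; rw [hc]; ring)
    rw [Finset.mem_biUnion]
    refine ⟨p.1 + p.2, ?_, (hADmem _ p).mpr ⟨e1', e2', rfl⟩⟩
    rw [hM, Finset.mem_image]
    exact ⟨p, by rw [hSf, Set.Finite.mem_toFinset]; exact hfp, rfl⟩
  have e2 : ∑ q ∈ Sf, f q = ∑ q ∈ U, f q := by
    apply Finset.sum_subset Finset.subset_union_left
    intro p _ hnp
    by_contra hfp
    exact hnp (by rw [hSf, Set.Finite.mem_toFinset]; exact hfp)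
  rw [e1, e2]


end Std


lemma zf_apply (h g : L) (a : ℂ) (ha : a ≠ 0) (hP : P 1 g) (h1 : g.coeff 1 = a) (k : ℤ) :
    zf h g a ha hP h1 k = HahnSeries.C (h.coeff k) * g ^ k := rfl

lemma nf_apply (F h : L) (hx : 0 < h.orderTop) (k : ℕ) :
    nf F h hx k = HahnSeries.C (F.coeff ((k:ℤ)-1)) * h ^ k := rfl

lemma Psi_eq (F h : L) (hx : 0 < h.orderTop) :
    Psi F h = single (1:ℤ) 1 * (nf F h hx).hsum := dif_pos hx

lemma Psi_coeff' (F h : L) (hP1 : P 1 h) (n : ℤ) :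
    (Psi F h).coeff n = ∑ᶠ k : ℕ, F.coeff ((k:ℤ)-1) * (h ^ k).coeff (n-1) :=
  Psi_coeff F h (P_orderTop hP1) n

lemma order_inv {f : L} (hf : f ≠ 0) : (f⁻¹).order = -f.order := by
  have hinv : f⁻¹ ≠ 0 := inv_ne_zero hf
  have h := HahnSeries.order_mul (x := f) (y := f⁻¹) hf hinv
  rw [mul_inv_cancel₀ hf, HahnSeries.order_one] at h
  omega

lemma inv_coeff_neg_order {f : L} (hf : f ≠ 0) : (f⁻¹).coeff (-f.order) ≠ 0 := by
  rw [← order_inv hf]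
  exact (HahnSeries.coeff_order_eq_zero.not.2 (inv_ne_zero hf))

section Std
variable {g : L} {a : ℂ} (ha : a ≠ 0) (hP : P 1 g) (h1 : g.coeff 1 = a)

lemma comp_one : comp 1 g a ha hP h1 = 1 := by
  have := comp_single ha hP h1 0 1
  rw [HahnSeries.single_zero_one] at this
  rw [this, map_one, one_mul, zpow_zero]

lemma comp_pow (h : L) (j : ℕ) :
    comp (h ^ j) g a ha hP h1 = (comp h g a ha hP h1) ^ j := by
  induction j with
  | zero => rw [pow_zero, pow_zero]; exact comp_one ha hP h1
  | succ j ih => rw [pow_succ, pow_succ, comp_mul ha hP h1, ih]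

lemma comp_res (h : L) : (comp h g a ha hP h1 * E g).coeff 0 = h.coeff (-1) := by
  have heq : comp h g a ha hP h1 * E g = ((E g) • (zf h g a ha hP h1)).hsum := by
    rw [SummableFamily.hsum_smul, mul_comm]; rfl
  rw [heq, SummableFamily.coeff_hsum]
  have hterm : ∀ k : ℤ, (((E g) • (zf h g a ha hP h1)) k).coeff 0
      = h.coeff k * (if k = -1 then 1 else 0) := by
    intro k
    rw [SummableFamily.smul_apply, HahnSeries.of_symm_smul_of_eq_mul, zf_apply]
    rw [show E g * (HahnSeries.C (h.coeff k) * g ^ k) = HahnSeries.C (h.coeff k) * (g ^ k * E g) by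
      ring]
    rw [C_mul_coeff, resKey ha hP h1 k]
  rw [finsum_congr hterm, finsum_eq_single _ (-1 : ℤ) (fun k hk => by rw [if_neg hk, mul_zero]),
    if_pos rfl, mul_one]

/-- Lagrange coefficient extraction  -/
lemma lagrange_extract (F : L) (hcomp : comp F g a ha hP h1 = single (-1 : ℤ) 1) (j : ℕ) :
    (F ^ j).coeff (-1) = (j : ℂ) * g.coeff j := by
  have h2 : comp (F ^ j) g a ha hP h1 = single (-(j:ℤ)) 1 := by
    rw [comp_pow ha hP h1, hcomp, HahnSeries.single_pow]
    congr 1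
    · simp
    · rw [one_pow]
  have h3 := comp_res ha hP h1 (F ^ j)
  rw [h2] at h3
  rw [← h3]
  have := HahnSeries.coeff_single_mul_add (r := (1:ℂ)) (x := E g) (a := (j:ℤ)) (b := -(j:ℤ))
  rw [add_neg_cancel] at this
  rw [this, one_mul, E_coeff]
  norm_num


end Std

section FP
variable (F : L)

def seq : ℕ → L := fun m => (Psi F)^[m] 0

lemma P_zero_series : P 1 (0 : L) := fun n _ => rfl

lemma seq_P (m : ℕ) : P 1 (seq F m) := by
  induction m with
  | zero => exact P_zero_series
  | succ m ih => rw [seq, Function.iterate_succ_apply']; exact Psi_P F _ ih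

lemma seq_succ (m : ℕ) : seq F (m+1) = Psi F (seq F m) :=
  Function.iterate_succ_apply' _ _ _

lemma seq_agree_succ (m : ℕ) : ∀ j ≤ (m:ℤ), (seq F m).coeff j = (seq F (m+1)).coeff j := by
  induction m with
  | zero => intro j hj
            rw [seq_P F 0 j (by omega), seq_P F 1 j (by omega)]
  | succ m ih =>
      intro j hj
      rw [seq_succ, seq_succ]
      exact Psi_loc F _ _ (seq_P F m) (seq_P F (m+1)) m ih j (by push_cast at hj ⊢; omega)

lemma seq_agree (m m' : ℕ) (hmm : m ≤ m') : ∀ j ≤ (m:ℤ), (seq F m).coeff j = (seq F m').coeff j := by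
  induction m' with
  | zero => intro j hj
            have : m = 0 := by omega
            rw [this]
  | succ m' ih =>
      intro j hj
      by_cases hc : m = m' + 1
      · rw [hc]
      · have h1 := ih (by omega) j hj
        rw [h1]
        exact seq_agree_succ F m' j (by omega)

def gcoef : ℤ → ℂ := fun n => if 0 < n then (seq F n.toNat).coeff n else 0

def g0 : L := HahnSeries.ofSuppBddBelow (gcoef F)
  (HahnSeries.forallLTEqZero_supp_BddBelow _ 1 (fun m hm => by
    rw [gcoef, if_neg (by omega)]))

lemma g0_coeff (n : ℤ) : (g0 F).coeff n = if 0 < n then (seq F n.toNat).coeff n else 0 := rfl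

lemma g0_P : P 1 (g0 F) := by
  intro n hn
  rw [g0_coeff, if_neg (by omega)]

lemma g0_agree (m : ℕ) : ∀ j ≤ (m:ℤ), (g0 F).coeff j = (seq F m).coeff j := by
  intro j hj
  by_cases hj0 : 0 < j
  · rw [g0_coeff, if_pos hj0]
    have h2 : j.toNat ≤ m := by omega
    have := seq_agree F j.toNat m h2 j (by omega)
    exact this
  · rw [g0_coeff, if_neg hj0, seq_P F m j (by omega)]

lemma g0_fixed : Psi F (g0 F) = g0 F := by
  ext n
  by_cases hn : 0 < n
  · set m : ℕ := n.toNat with hm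
    have hn' : (m:ℤ) = n := by omega
    have h1 : ∀ j ≤ ((m-1:ℕ):ℤ), (g0 F).coeff j = (seq F (m-1)).coeff j := g0_agree F (m-1)
    have h2 := Psi_loc F _ _ (g0_P F) (seq_P F (m-1)) ((m-1:ℕ):ℤ) h1 n
      (by push_cast; omega)
    rw [h2]
    have h3 : Psi F (seq F (m-1)) = seq F m := by
      rw [← seq_succ]
      congr 1
      omega
    rw [h3]
    rw [g0_coeff, if_pos hn, ← hm]
  · rw [Psi_P F _ (g0_P F) n (by omega), g0_P F n (by omega)]

lemma g0_coeff_one : (g0 F).coeff 1 = F.coeff (-1) := by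
  rw [g0_coeff, if_pos (by omega)]
  show (seq F 1).coeff 1 = _
  rw [show (1:ℕ) = 0 + 1 from rfl, seq_succ,
    show seq F 0 = 0 from rfl, Psi_coeff' F 0 (P_zero_series) 1]
  rw [finsum_eq_single _ 0]
  · norm_num
  · intro k hk
    rw [zero_pow hk, HahnSeries.coeff_zero, mul_zero]

end FP

section FE
variable {F g : L} {a : ℂ}

lemma funct_eq (ha : a ≠ 0) (hP : P 1 g) (h1 : g.coeff 1 = a)
    (hF : ∀ k < (-1:ℤ), F.coeff k = 0) (hfix : Psi F g = g) :
    comp F g a ha hP h1 = single (-1 : ℤ) 1 := by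
  have hx : 0 < g.orderTop := P_orderTop hP
  have hgne : g ≠ 0 := g_ne ha h1
  set e : ℕ ↪ ℤ := ⟨fun k => (k:ℤ) - 1, fun x y hxy => by simpa using hxy⟩ with he
  have hfam : zf F g a ha hP h1 = g⁻¹ • ((nf F g hx).embDomain e) := by
    apply SummableFamily.ext
    intro k
    rw [zf_apply, SummableFamily.smul_apply, HahnSeries.of_symm_smul_of_eq_mul]
    by_cases hk : -1 ≤ k
    · have hke : k = e ((k+1).toNat) := by
        rw [he]; show k = ((k+1).toNat : ℤ) - 1; omega
      have h6 := SummableFamily.embDomain_image (nf F g hx) e (a := (k+1).toNat)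
      rw [← hke] at h6
      rw [h6, nf_apply]
      have h2 : (((k+1).toNat : ℤ)) - 1 = k := by omega
      rw [h2]
      have h3 : g ^ k = g ^ (((k+1).toNat : ℤ)) * g⁻¹ := by
        rw [← zpow_sub_one₀ hgne, h2]
      rw [h3, zpow_natCast]
      ring
    · rw [hF k (by omega), map_zero, zero_mul,
        SummableFamily.embDomain_notin_range, mul_zero]
      rw [he]
      rintro ⟨k0, hk0⟩
      change (k0:ℤ) - 1 = k at hk0
      omega
  have hnf : (nf F g hx).hsum = single (-1 : ℤ) 1 * g := by
    have h4 := Psi_eq F g hx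
    rw [hfix] at h4
    have h5 := congrArg (fun x => single (-1 : ℤ) (1:ℂ) * x) h4
    rw [← mul_assoc, HahnSeries.single_mul_single, neg_add_cancel, one_mul,
      HahnSeries.single_zero_one, one_mul] at h5
    exact h5.symm
  rw [comp, hfam, SummableFamily.hsum_smul, SummableFamily.hsum_embDomain, hnf]
  rw [show g⁻¹ * (single (-1:ℤ) 1 * g) = single (-1:ℤ) 1 * (g⁻¹ * g) by ring,
    inv_mul_cancel₀ hgne, mul_one]

end FE

section Std
variable {g : L} {a : ℂ} (ha : a ≠ 0) (hP : P 1 g) (h1 : g.coeff 1 = a)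

/-- bridge to the `laurentSubstCoeff` expression -/
lemma subst_bridge (h : L) (hh : ∀ k < (-1:ℤ), h.coeff k = 0) (n : ℤ) :
    h.coeff (-1) * (g⁻¹).coeff n +
      ∑ k ∈ Finset.Icc (0 : ℤ) n, h.coeff k * (g ^ k.toNat).coeff n
    = (comp h g a ha hP h1).coeff n := by
  rw [comp_coeff ha hP h1]
  have hsupp : (Function.support fun k : ℤ => h.coeff k * (g ^ k).coeff n)
      ⊆ ↑(insert (-1 : ℤ) (Finset.Icc (0:ℤ) n)) := by
    intro k hk
    simp only [Function.mem_support, ne_eq] at hk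
    have e1 : h.coeff k ≠ 0 := left_ne_zero_of_mul hk
    have e2 : (g ^ k).coeff n ≠ 0 := right_ne_zero_of_mul hk
    have hk1 : -1 ≤ k := le_of_not_gt fun hc => e1 (hh k hc)
    have hk2 : k ≤ n := le_of_not_gt fun hc => e2 (g_zpow_P ha hP h1 k n hc)
    simp only [Finset.coe_insert, Set.mem_insert_iff, Finset.mem_coe, Finset.mem_Icc]
    omega
  rw [finsum_eq_finset_sum_of_support_subset _ hsupp, Finset.sum_insert (by
    rw [Finset.mem_Icc]; omega)]
  congr 1
  · rw [zpow_neg_one]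
  · refine Finset.sum_congr rfl fun k hk => ?_
    rw [Finset.mem_Icc] at hk
    have : g ^ k = g ^ (k.toNat) := by
      rw [← zpow_natCast, Int.toNat_of_nonneg hk.1]
    rw [this]

include ha hP h1 in
/-- uniqueness of `F` -/
lemma unique_F (F F' : L) (hcc : comp F' g a ha hP h1 = comp F g a ha hP h1) : F' = F := by
  by_contra hne
  set d := F' - F with hd
  have hdne : d ≠ 0 := fun hc => hne (by
    have := congrArg (fun x => x + F) hc
    simpa [hd] using this)
  have hcompd : comp d g a ha hP h1 = 0 := by
    have h2 : comp (F + d) g a ha hP h1 = comp F g a ha hP h1 + comp d g a ha hP h1 :=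
      comp_add ha hP h1 F d
    rw [show F + d = F' by rw [hd]; ring, hcc] at h2
    have := congrArg (fun x => x - comp F g a ha hP h1) h2
    simpa using this.symm
  have h3 := comp_coeff ha hP h1 d d.order
  rw [hcompd, HahnSeries.coeff_zero] at h3
  rw [finsum_eq_single _ d.order (fun k hk => ?_)] at h3
  · rw [g_zpow_coeff_self ha hP h1] at h3
    exact (mul_ne_zero ((HahnSeries.coeff_order_eq_zero.not.2 hdne)) (zpow_ne_zero _ ha)) h3.symm
  · rcases lt_or_gt_of_ne hk with hlt | hgt
    · rw [HahnSeries.coeff_eq_zero_of_lt_order hlt, zero_mul]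
    · rw [g_zpow_P ha hP h1 k d.order hgt, mul_zero]


end Std

end

end LagrangeAux

/-- **Lagrange inversion for Laurent series (lem:inversion).**  Let
`f(x) = ∑_{k≥−1} f_k x^k` be a formal Laurent series with complex coefficients having at
most a simple pole at `x = 0` and with `f_{−1} ≠ 0`.  Then the series
`g(z) = ∑_{k≥1} (1/k)·([x^{−1}] f^k)·z^{−k}` lies in `z^{−1}·ℂ⟦z^{−1}⟧` with leading
coefficient `f_{−1} ≠ 0`, it satisfies `f(g(z)) = z`, it is the unique such element of
`ℂ⟦z^{−1}⟧` (on which the substitution is defined), and moreover `f` is uniquely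
determined by `g`.

Series in `z^{−1}` are encoded as `LaurentSeries ℂ` in the variable `u = z^{−1}`; thus
`g.coeff k` is the coefficient of `z^{−k}`, membership in `z^{−1}·ℂ⟦z^{−1}⟧` reads
`g.coeff n = 0` for `n ≤ 0`, and the equation `f(g(z)) = z` reads
`[u^n] f(g) = δ_{n,−1}` for all `n : ℤ`. -/
theorem laurent_lagrange_inversion (F : LaurentSeries ℂ)
    (hF : ∀ k < (-1 : ℤ), F.coeff k = 0) (hF1 : F.coeff (-1) ≠ 0) :
    ∃ g : LaurentSeries ℂ,
      (∀ n : ℤ, n ≤ 0 → g.coeff n = 0) ∧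
      (∀ n : ℤ, 1 ≤ n → g.coeff n = (n : ℂ)⁻¹ * (F ^ n.toNat).coeff (-1)) ∧
      g.coeff 1 = F.coeff (-1) ∧
      (∀ n : ℤ, laurentSubstCoeff F g n = if n = -1 then 1 else 0) ∧
      (∀ g' : LaurentSeries ℂ, (∀ n : ℤ, n ≤ 0 → g'.coeff n = 0) →
        (∀ n : ℤ, laurentSubstCoeff F g' n = if n = -1 then 1 else 0) → g' = g) ∧
      (∀ F' : LaurentSeries ℂ, (∀ k < (-1 : ℤ), F'.coeff k = 0) → F'.coeff (-1) ≠ 0 →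
        (∀ n : ℤ, laurentSubstCoeff F' g n = if n = -1 then 1 else 0) → F' = F) := by
  classical
  open LagrangeAux in
  set a := F.coeff (-1) with hadef
  set g := LagrangeAux.g0 F with hgdef
  have hP : LagrangeAux.P 1 g := LagrangeAux.g0_P F
  have h1 : g.coeff 1 = a := LagrangeAux.g0_coeff_one F
  have hS : ∀ n : ℤ, n ≤ 0 → g.coeff n = 0 := fun n hn => hP n (by omega)
  have hcomp : LagrangeAux.comp F g a hF1 hP h1 = HahnSeries.single (-1 : ℤ) 1 :=
    LagrangeAux.funct_eq hF1 hP h1 hF (LagrangeAux.g0_fixed F)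
  -- extraction of the Lagrange formula for any standard solution
  have extract : ∀ (g' : LaurentSeries ℂ) (a' : ℂ) (ha' : a' ≠ 0) (hP' : LagrangeAux.P 1 g')
      (h1' : g'.coeff 1 = a')
      (hc' : LagrangeAux.comp F g' a' ha' hP' h1' = HahnSeries.single (-1 : ℤ) 1)
      (n : ℤ), 1 ≤ n → g'.coeff n = (n : ℂ)⁻¹ * (F ^ n.toNat).coeff (-1) := by
    intro g' a' ha' hP' h1' hc' n hn
    have hj := LagrangeAux.lagrange_extract ha' hP' h1' F hc' n.toNat
    have hc : ((n.toNat : ℕ) : ℤ) = n := by omega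
    rw [hc] at hj
    have hcast : ((n.toNat : ℕ) : ℂ) = (n : ℂ) := by
      exact_mod_cast congrArg (Int.cast : ℤ → ℂ) hc
    rw [hcast] at hj
    have hnn : (n : ℂ) ≠ 0 := by
      rw [Int.cast_ne_zero]; omega
    rw [hj]
    field_simp
  -- the substitution identity
  have hsubst : ∀ (g' : LaurentSeries ℂ) (a' : ℂ) (ha' : a' ≠ 0) (hP' : LagrangeAux.P 1 g')
      (h1' : g'.coeff 1 = a') (h : LaurentSeries ℂ) (hh : ∀ k < (-1:ℤ), h.coeff k = 0) (n : ℤ),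
      laurentSubstCoeff h g' n = (LagrangeAux.comp h g' a' ha' hP' h1').coeff n :=
    fun g' a' ha' hP' h1' h hh n => LagrangeAux.subst_bridge ha' hP' h1' h hh n
  refine ⟨g, hS, ?_, h1, ?_, ?_, ?_⟩
  · exact fun n hn => extract g a hF1 hP h1 hcomp n hn
  · intro n
    rw [hsubst g a hF1 hP h1 F hF n, hcomp, HahnSeries.coeff_single]
    simp
  · -- uniqueness of g
    intro g' hS' heq'
    have hP1' : LagrangeAux.P 1 g' := fun n hn => hS' n (by omega)
    have hne : g' ≠ 0 := by
      intro h0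
      have h := heq' (-1)
      rw [if_pos rfl] at h
      unfold laurentSubstCoeff at h
      rw [h0, inv_zero, HahnSeries.coeff_zero, mul_zero,
        Finset.Icc_eq_empty (by omega), Finset.sum_empty, add_zero] at h
      exact zero_ne_one h
    have hord1 : 1 ≤ g'.order := by
      by_contra hlt
      push_neg at hlt
      exact (HahnSeries.coeff_order_eq_zero.not.2 hne) (hP1' _ hlt)
    have ha' : g'.coeff 1 ≠ 0 := by
      intro h10
      have hordne : g'.order ≠ 1 := fun hc =>
        (HahnSeries.coeff_order_eq_zero.not.2 hne) (by rw [hc]; exact h10)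
      have h := heq' (-g'.order)
      rw [if_neg (by omega)] at h
      unfold laurentSubstCoeff at h
      rw [Finset.Icc_eq_empty (by omega), Finset.sum_empty, add_zero] at h
      exact mul_ne_zero hF1 (LagrangeAux.inv_coeff_neg_order hne) h
    have hcomp' : LagrangeAux.comp F g' (g'.coeff 1) ha' hP1' rfl = HahnSeries.single (-1:ℤ) 1 := by
      ext n
      rw [← hsubst g' (g'.coeff 1) ha' hP1' rfl F hF n, heq' n, HahnSeries.coeff_single]
      simp
    ext n
    by_cases hn : 1 ≤ n
    · rw [extract g' (g'.coeff 1) ha' hP1' rfl hcomp' n hn,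
        extract g a hF1 hP h1 hcomp n hn]
    · rw [hS' n (by omega), hS n (by omega)]
  · -- uniqueness of F
    intro F' hF' hF1' heq'
    apply LagrangeAux.unique_F hF1 hP h1 F F'
    rw [hcomp]
    ext n
    rw [← hsubst g a hF1 hP h1 F' hF' n, heq' n, HahnSeries.coeff_single]
    simp
end

section
/- Let n and k be non-negative integers, τ ∈ ℂ, and a = (a₁, a₂, …) a sequence of complex numbers. Let α(l,m) = c₀ + c₁·l + c₂·m be an affine-linear complex-valued function of (l,m) (a polynomial of degree at most one in l and m) taking non-zero values for all l, m ∈ {0, …, n}. Then C(τ,k)·B̂_{n,k}(a) = ∑_{m=0}^{n} ∑_{l=0}^{m} (α(0,0)/α(l,m))·C(τ−α(l,m), k−l)·C(α(l,m), l)·B̂_{m,l}(a)·B̂_{n−m,k−l}(a). -/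
/-- The generalized binomial coefficient `C(τ,j) = τ(τ−1)⋯(τ−j+1)/j!` for `τ ∈ ℂ` and an
integer `j`, with the convention `C(τ,j) = 0` for `j < 0`. -/
noncomputable def genChoose (τ : ℂ) (j : ℤ) : ℂ :=
  if j < 0 then 0 else (∏ i ∈ Finset.range j.toNat, (τ - i)) / (j.toNat.factorial : ℂ)

/-- The partial ordinary Bell coefficient `B̂_{n,k}(a) = [x^n] (∑_{i≥1} a_i x^i)^k` for
`k ≥ 0`, with the convention `B̂_{n,k}(a) = 0` for `k < 0`.  (In particular
`B̂_{0,0}(a) = 1` and `B̂_{0,k}(a) = 0` for `k ≠ 0`.) -/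
noncomputable def bellHat (a : ℕ → ℂ) (n : ℕ) (k : ℤ) : ℂ :=
  if k < 0 then 0 else
    PowerSeries.coeff n ((PowerSeries.mk fun i => if i = 0 then 0 else a i) ^ k.toNat)

open Finset BigOperators Polynomial


noncomputable def ff (x : ℂ) (j : ℕ) : ℂ := ∏ i ∈ Finset.range j, (x - (i : ℂ))

lemma ff_zero (x : ℂ) : ff x 0 = 1 := by simp [ff]

lemma ff_succ (x : ℂ) (j : ℕ) : ff x (j + 1) = x * ff (x - 1) j := by
  unfold ff
  rw [Finset.prod_range_succ']
  simp only [Nat.cast_zero, sub_zero]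
  rw [mul_comm]
  congr 1
  apply Finset.prod_congr rfl
  intro i _
  push_cast
  ring

variable {ι : Type*} [DecidableEq ι]

noncomputable def Gsum (s : Finset ι) (z : ι → ℂ) (x y : ℂ) : ℂ :=
  ∑ S ∈ s.powerset, ff (x + ∑ i ∈ S, z i) S.card * ff (y - ∑ i ∈ S, z i) (s.card - S.card)

noncomputable def Hsum (s : Finset ι) (z : ι → ℂ) (x y : ℂ) : ℂ :=
  ∑ S ∈ s.powerset,
    (x / (x + ∑ i ∈ S, z i)) * ff (x + ∑ i ∈ S, z i) S.card *
      ff (y - ∑ i ∈ S, z i) (s.card - S.card)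

lemma sum_powerset_sum_mem {M : Type*} [AddCommMonoid M] (s : Finset ι) (F : ι → Finset ι → M) :
    ∑ S ∈ s.powerset, ∑ i ∈ S, F i S
      = ∑ i ∈ s, ∑ S ∈ (s.erase i).powerset, F i (insert i S) := by
  have h1 : ∀ S ∈ s.powerset, ∑ i ∈ S, F i S = ∑ i ∈ s, if i ∈ S then F i S else 0 := by
    intro S hS
    rw [Finset.mem_powerset] at hS
    rw [Finset.sum_ite_mem]
    congr 1
    rw [Finset.inter_eq_right.2 hS]
  rw [Finset.sum_congr rfl h1, Finset.sum_comm]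
  apply Finset.sum_congr rfl
  intro i hi
  rw [← Finset.sum_filter]
  apply Finset.sum_bij' (fun S _ => Finset.erase S i) (fun S _ => insert i S)
  · intro S hS
    simp only [Finset.mem_filter, Finset.mem_powerset] at hS
    exact Finset.mem_powerset.2 (Finset.erase_subset_erase _ hS.1)
  · intro S hS
    simp only [Finset.mem_powerset] at hS
    simp only [Finset.mem_filter, Finset.mem_powerset]
    exact ⟨Finset.insert_subset hi (hS.trans (Finset.erase_subset _ _)), Finset.mem_insert_self _ _⟩
  · intro S hS
    simp only [Finset.mem_filter, Finset.mem_powerset] at hS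
    exact Finset.insert_erase hS.2
  · intro S hS
    simp only [Finset.mem_powerset] at hS
    exact Finset.erase_insert (fun hi => (Finset.notMem_erase i s) (hS hi))
  · intro S hS
    simp only [Finset.mem_filter] at hS
    rw [Finset.insert_erase hS.2]

lemma star_lemma (s : Finset ι) (z : ι → ℂ) (x y : ℂ)
    (hx : ∀ S ∈ s.powerset, x + ∑ i ∈ S, z i ≠ 0) :
    Gsum s z x y = Hsum s z x y
      + ∑ i ∈ s, z i * Gsum (s.erase i) z (x + z i - 1) (y - z i) := by
  have key : ∀ S ∈ s.powerset,
      ff (x + ∑ i ∈ S, z i) S.card * ff (y - ∑ i ∈ S, z i) (s.card - S.card)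
        = (x / (x + ∑ i ∈ S, z i)) * ff (x + ∑ i ∈ S, z i) S.card *
            ff (y - ∑ i ∈ S, z i) (s.card - S.card)
          + ∑ i ∈ S, (z i / (x + ∑ j ∈ S, z j)) *
              (ff (x + ∑ j ∈ S, z j) S.card * ff (y - ∑ j ∈ S, z j) (s.card - S.card)) := by
    intro S hS
    have h0 := hx S hS
    rw [← Finset.sum_mul, ← Finset.sum_div]
    field_simp
  unfold Gsum Hsum
  rw [Finset.sum_congr rfl key, Finset.sum_add_distrib]
  congr 1
  rw [sum_powerset_sum_mem]
  apply Finset.sum_congr rfl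
  intro i hi
  rw [Finset.mul_sum]
  apply Finset.sum_congr rfl
  intro S hS
  have hiS : i ∉ S := fun h => Finset.notMem_erase i s ((Finset.mem_powerset.1 hS) h)
  have hins : insert i S ∈ s.powerset := Finset.mem_powerset.2
    (Finset.insert_subset hi ((Finset.mem_powerset.1 hS).trans (Finset.erase_subset _ _)))
  have hne := hx (insert i S) hins
  rw [Finset.sum_insert hiS] at hne
  rw [Finset.sum_insert hiS, Finset.card_insert_of_notMem hiS]
  have hcard : s.card - (S.card + 1) = (s.erase i).card - S.card := by
    rw [Finset.card_erase_of_mem hi]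
    have := Finset.card_le_card (Finset.mem_powerset.1 hS)
    have := Finset.card_erase_of_mem hi
    omega
  rw [hcard, ff_succ]
  have e1 : x + (z i + ∑ j ∈ S, z j) - 1 = x + z i - 1 + ∑ j ∈ S, z j := by ring
  have e2 : y - (z i + ∑ j ∈ S, z j) = y - z i - ∑ j ∈ S, z j := by ring
  rw [e1, e2]
  field_simp

theorem HGmain (N : ℕ) : ∀ (s : Finset ι) (z : ι → ℂ), s.card = N →
    (∀ x y : ℂ, (∀ S ∈ s.powerset, x + ∑ i ∈ S, z i ≠ 0) → Hsum s z x y = ff (x + y) N)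
    ∧ (∀ x y x' y' : ℂ, x + y = x' + y' → Gsum s z x y = Gsum s z x' y') := by
  induction N with
  | zero =>
    intro s z hs
    rw [Finset.card_eq_zero] at hs
    subst hs
    constructor
    · intro x y hx
      have h0 : x ≠ 0 := by simpa using hx ∅ (by simp)
      simp [Hsum, ff_zero, h0]
    · intro x y x' y' _
      simp [Gsum, ff_zero]
  | succ N ih =>
    intro s z hs
    have hpos : 0 < s.card := hs ▸ N.succ_pos
    obtain ⟨j, hj⟩ := Finset.card_pos.1 hpos
    set t := s.erase j with htdef
    have hjt : j ∉ t := Finset.notMem_erase j s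
    have hins : insert j (t) = s := Finset.insert_erase hj
    have htc : (t).card = N := by
      rw [htdef, Finset.card_erase_of_mem hj, hs]
      omega
    have iht := ih (t) z htc
    have ha : ∀ x y : ℂ, (∀ S ∈ s.powerset, x + ∑ i ∈ S, z i ≠ 0) →
        Hsum s z x y = ff (x + y) (N + 1) := by
      intro x y hx
      have hxt : ∀ S ∈ (t).powerset, x + ∑ i ∈ S, z i ≠ 0 := by
        intro S hS
        exact hx S (Finset.mem_powerset.2
          ((Finset.mem_powerset.1 hS).trans (Finset.erase_subset _ _)))
      have step1 : ∀ S ∈ (t).powerset,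
          (x / (x + ∑ i ∈ S, z i)) * ff (x + ∑ i ∈ S, z i) S.card *
              ff (y - ∑ i ∈ S, z i) (N + 1 - S.card)
            = (x + y) * ((x / (x + ∑ i ∈ S, z i)) * ff (x + ∑ i ∈ S, z i) S.card *
                ff (y - 1 - ∑ i ∈ S, z i) (N - S.card))
              - x * (ff (x + ∑ i ∈ S, z i) S.card *
                ff (y - 1 - ∑ i ∈ S, z i) (N - S.card)) := by
        intro S hS
        have hScard : S.card ≤ N := htc ▸ Finset.card_le_card (Finset.mem_powerset.1 hS)
        have hc1 : N + 1 - S.card = (N - S.card) + 1 := by omega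
        rw [hc1, ff_succ]
        have e : y - ∑ i ∈ S, z i - 1 = y - 1 - ∑ i ∈ S, z i := by ring
        rw [e]
        have h0 := hxt S hS
        field_simp
        ring
      have step2 : ∀ S ∈ (t).powerset,
          (x / (x + ∑ i ∈ insert j S, z i)) * ff (x + ∑ i ∈ insert j S, z i) (insert j S).card *
              ff (y - ∑ i ∈ insert j S, z i) (N + 1 - (insert j S).card)
            = x * (ff (x + z j - 1 + ∑ i ∈ S, z i) S.card *
                ff (y - z j - ∑ i ∈ S, z i) (N - S.card)) := by
        intro S hS
        have hjS : j ∉ S := fun h => hjt ((Finset.mem_powerset.1 hS) h)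
        have hScard : S.card ≤ N := htc ▸ Finset.card_le_card (Finset.mem_powerset.1 hS)
        have hins' : insert j S ∈ s.powerset := by
          rw [← hins]
          exact Finset.mem_powerset.2
            (Finset.insert_subset_insert _ (Finset.mem_powerset.1 hS))
        have h0 := hx _ hins'
        rw [Finset.sum_insert hjS] at h0 ⊢
        rw [Finset.card_insert_of_notMem hjS]
        have hc1 : N + 1 - (S.card + 1) = N - S.card := by omega
        rw [hc1, ff_succ]
        have e1 : x + (z j + ∑ i ∈ S, z i) - 1 = x + z j - 1 + ∑ i ∈ S, z i := by ring
        have e2 : y - (z j + ∑ i ∈ S, z i) = y - z j - ∑ i ∈ S, z i := by ring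
        rw [e1, e2]
        field_simp
      have expand : Hsum s z x y
          = ∑ S ∈ (t).powerset,
              ((x + y) * ((x / (x + ∑ i ∈ S, z i)) * ff (x + ∑ i ∈ S, z i) S.card *
                ff (y - 1 - ∑ i ∈ S, z i) (N - S.card))
              - x * (ff (x + ∑ i ∈ S, z i) S.card *
                ff (y - 1 - ∑ i ∈ S, z i) (N - S.card)))
            + ∑ S ∈ (t).powerset,
              x * (ff (x + z j - 1 + ∑ i ∈ S, z i) S.card *
                ff (y - z j - ∑ i ∈ S, z i) (N - S.card)) := by
        unfold Hsum
        rw [hs, ← hins, Finset.sum_powerset_insert hjt]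
        rw [Finset.sum_congr rfl step1, Finset.sum_congr rfl step2]
      rw [expand, Finset.sum_sub_distrib, ← Finset.mul_sum, ← Finset.mul_sum, ← Finset.mul_sum]
      have hH : Hsum (t) z x (y - 1) = ff (x + (y - 1)) N := iht.1 x (y - 1) hxt
      have hG : Gsum (t) z (x + z j - 1) (y - z j) = Gsum (t) z x (y - 1) :=
        iht.2 _ _ _ _ (by ring)
      have hH' : ∑ S ∈ (t).powerset,
          (x / (x + ∑ i ∈ S, z i)) * ff (x + ∑ i ∈ S, z i) S.card *
            ff (y - 1 - ∑ i ∈ S, z i) (N - S.card) = ff (x + (y - 1)) N := by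
        rw [← hH]
        unfold Hsum
        rw [htc]
      have hG1 : ∑ S ∈ (t).powerset,
          ff (x + ∑ i ∈ S, z i) S.card * ff (y - 1 - ∑ i ∈ S, z i) (N - S.card)
            = Gsum (t) z x (y - 1) := by
        unfold Gsum
        rw [htc]
      have hG2 : ∑ S ∈ (t).powerset,
          ff (x + z j - 1 + ∑ i ∈ S, z i) S.card * ff (y - z j - ∑ i ∈ S, z i) (N - S.card)
            = Gsum (t) z (x + z j - 1) (y - z j) := by
        unfold Gsum
        rw [htc]
      rw [hH', hG1, hG2, hG, ff_succ]
      ring_nf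
    refine ⟨ha, ?_⟩
    intro x y x' y' hxy
    set c := x + y with hc
    set P : Polynomial ℂ := ∑ S ∈ s.powerset,
        (∏ i ∈ Finset.range S.card, (Polynomial.X + Polynomial.C ((∑ j ∈ S, z j) - i))) *
        (∏ i ∈ Finset.range (N + 1 - S.card),
          (Polynomial.C (c - (∑ j ∈ S, z j) - i) - Polynomial.X)) with hP
    have hev : ∀ u : ℂ, P.eval u = Gsum s z u (c - u) := by
      intro u
      rw [hP, Polynomial.eval_finset_sum]
      unfold Gsum
      rw [hs]
      apply Finset.sum_congr rfl
      intro S hS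
      rw [Polynomial.eval_mul, Polynomial.eval_prod, Polynomial.eval_prod]
      unfold ff
      congr 1
      · apply Finset.prod_congr rfl
        intro i _
        simp only [Polynomial.eval_add, Polynomial.eval_X, Polynomial.eval_C]
        ring
      · apply Finset.prod_congr rfl
        intro i _
        simp only [Polynomial.eval_sub, Polynomial.eval_X, Polynomial.eval_C]
        ring
    set v : ℂ := ff c (N + 1) + ∑ i ∈ s, z i * Gsum (s.erase i) z 0 (c - 1) with hv
    have hgood : ∀ u : ℂ, (∀ S ∈ s.powerset, u + ∑ i ∈ S, z i ≠ 0) → P.eval u = v := by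
      intro u hu
      rw [hev u, star_lemma s z u (c - u) hu, ha u (c - u) hu,
        show u + (c - u) = c from by ring, hv]
      congr 1
      apply Finset.sum_congr rfl
      intro i hi
      congr 1
      exact (ih (s.erase i) z (by rw [Finset.card_erase_of_mem hi, hs]; omega)).2 _ _ _ _ (by ring)
    have hPconst : ∀ u : ℂ, P.eval u = v := by
      have hQ : P - Polynomial.C v = 0 := by
        apply Polynomial.eq_zero_of_infinite_isRoot
        have hfin : (↑(s.powerset.image (fun S => -(∑ i ∈ S, z i))) : Set ℂ).Finite :=
          (s.powerset.image _).finite_toSet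
        apply Set.Infinite.mono (s := (↑(s.powerset.image (fun S => -(∑ i ∈ S, z i))) : Set ℂ)ᶜ)
        · intro u hu
          simp only [Set.mem_compl_iff, Finset.coe_image, Set.mem_image, Finset.mem_coe,
            not_exists, not_and] at hu
          have hu' : ∀ S ∈ s.powerset, u + ∑ i ∈ S, z i ≠ 0 := by
            intro S hS h0
            exact hu S hS (by linear_combination -h0)
          simp only [Set.mem_setOf_eq, Polynomial.IsRoot, Polynomial.eval_sub,
            Polynomial.eval_C, hgood u hu', sub_self]
        · exact Set.Finite.infinite_compl hfin
      intro u
      have h2 := congrArg (Polynomial.eval u) hQ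
      simp only [Polynomial.eval_sub, Polynomial.eval_C, Polynomial.eval_zero,
        sub_eq_zero] at h2
      exact h2
    have e1 : y = c - x := by rw [hc]; ring
    have e2 : y' = c - x' := by rw [hxy]; ring
    rw [e1, e2, ← hev x, ← hev x', hPconst x, hPconst x']

lemma hurwitz_final (k : ℕ) (z : Fin k → ℂ) (x y : ℂ)
    (hx : ∀ S : Finset (Fin k), x + ∑ i ∈ S, z i ≠ 0) :
    ∑ S ∈ (Finset.univ : Finset (Fin k)).powerset,
        (x / (x + ∑ i ∈ S, z i)) * ff (x + ∑ i ∈ S, z i) S.card *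
          ff (y - ∑ i ∈ S, z i) (k - S.card)
      = ff (x + y) k := by
  have h := (HGmain k Finset.univ z (by simp)).1 x y (fun S _ => hx S)
  unfold Hsum at h
  simpa using h

lemma coeff_pow_eq_zero {φ : PowerSeries ℂ} (hφ : PowerSeries.constantCoeff φ = 0) :
    ∀ {p j : ℕ}, j < p → PowerSeries.coeff j (φ ^ p) = 0 := by
  intro p
  induction p with
  | zero => intro j h; omega
  | succ p ih =>
    intro j h
    rw [pow_succ, PowerSeries.coeff_mul]
    apply Finset.sum_eq_zero
    rintro ⟨u, v⟩ huv
    rw [Finset.HasAntidiagonal.mem_antidiagonal] at huv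
    rcases Nat.eq_zero_or_pos v with hv | hv
    · subst hv
      simp [PowerSeries.coeff_zero_eq_constantCoeff, hφ]
    · have hu : u < p := by omega
      rw [ih hu, zero_mul]

lemma genChoose_natCast (τ : ℂ) (k : ℕ) :
    genChoose τ (k : ℤ) = ff τ k / (k.factorial : ℂ) := by
  simp [genChoose, ff]

lemma genChoose_subCast (τ : ℂ) {k l : ℕ} (h : l ≤ k) :
    genChoose τ ((k : ℤ) - l) = ff τ (k - l) / ((k - l).factorial : ℂ) := by
  rw [show (k : ℤ) - l = ((k - l : ℕ) : ℤ) by omega, genChoose_natCast]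

lemma genChoose_negCast (τ : ℂ) {k l : ℕ} (h : k < l) :
    genChoose τ ((k : ℤ) - l) = 0 := by
  rw [genChoose, if_pos (by omega)]

lemma bellHat_natCast (a : ℕ → ℂ) (n k : ℕ) :
    bellHat a n (k : ℤ)
      = PowerSeries.coeff n ((PowerSeries.mk fun i => if i = 0 then 0 else a i) ^ k) := by
  simp [bellHat]

lemma bellHat_subCast (a : ℕ → ℂ) (n : ℕ) {k l : ℕ} (h : l ≤ k) :
    bellHat a n ((k : ℤ) - l)
      = PowerSeries.coeff n ((PowerSeries.mk fun i => if i = 0 then 0 else a i) ^ (k - l)) := by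
  rw [show (k : ℤ) - l = ((k - l : ℕ) : ℤ) by omega, bellHat_natCast]

lemma bellHat_negCast (a : ℕ → ℂ) (n : ℕ) {k l : ℕ} (h : k < l) :
    bellHat a n ((k : ℤ) - l) = 0 := by
  rw [bellHat, if_pos (by omega)]

open Finset in
lemma split_sum (k n l : ℕ) (F : PowerSeries ℂ) (g : ℕ → ℂ) (S : Finset (Fin k))
    (hS : S.card = l) :
    ∑ m ∈ Finset.range (n + 1),
        g m * PowerSeries.coeff m (F ^ l) * PowerSeries.coeff (n - m) (F ^ (k - l))
      = ∑ d ∈ Finset.finsuppAntidiag (Finset.univ : Finset (Fin k)) n,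
          g (∑ i ∈ S, d i) * ∏ i, PowerSeries.coeff (d i) F := by
  have h1 : F ^ l = ∏ _i ∈ S, F := by rw [Finset.prod_const, hS]
  have h2 : F ^ (k - l) = ∏ _i ∈ Sᶜ, F := by
    rw [Finset.prod_const, Finset.card_compl, hS, Fintype.card_fin]
  rw [h1, h2]
  have expand : ∀ m : ℕ,
      g m * PowerSeries.coeff m (∏ _i ∈ S, F) * PowerSeries.coeff (n - m) (∏ _i ∈ Sᶜ, F)
        = ∑ d1 ∈ Finset.finsuppAntidiag S m, ∑ d2 ∈ Finset.finsuppAntidiag Sᶜ (n - m),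
            g m * (∏ i ∈ S, PowerSeries.coeff (d1 i) F) *
              ∏ i ∈ Sᶜ, PowerSeries.coeff (d2 i) F := by
    intro m
    rw [PowerSeries.coeff_prod, PowerSeries.coeff_prod]
    simp only [Finset.mul_sum, Finset.sum_mul]
    rw [Finset.sum_comm]
  rw [Finset.sum_congr rfl (fun m _ => expand m)]
  simp_rw [← Finset.sum_product']
  rw [Finset.sum_sigma']
  apply Finset.sum_bij (fun (x : Σ _m : ℕ, (Fin k →₀ ℕ) × (Fin k →₀ ℕ)) _ => x.2.1 + x.2.2)
  · rintro ⟨m, d1, d2⟩ hx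
    simp only [Finset.mem_sigma, Finset.mem_product, Finset.mem_range,
      Finset.mem_finsuppAntidiag] at hx
    obtain ⟨hm, ⟨hs1, hsup1⟩, hs2, hsup2⟩ := hx
    rw [Finset.mem_finsuppAntidiag]
    refine ⟨?_, Finset.subset_univ _⟩
    have e1 : ∑ i ∈ S, d1 i = Finset.univ.sum d1 := by
      apply Finset.sum_subset (Finset.subset_univ S)
      intro i _ hiS
      exact Finsupp.notMem_support_iff.1 fun hi => hiS (hsup1 hi)
    have e2 : ∑ i ∈ Sᶜ, d2 i = Finset.univ.sum d2 := by
      apply Finset.sum_subset (Finset.subset_univ Sᶜ)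
      intro i _ hiS
      exact Finsupp.notMem_support_iff.1 fun hi => hiS (hsup2 hi)
    have : Finset.univ.sum (d1 + d2) = Finset.univ.sum d1 + Finset.univ.sum d2 := by
      simp [Finsupp.add_apply, Finset.sum_add_distrib]
    rw [this, ← e1, ← e2, hs1, hs2]
    omega
  · rintro ⟨m, d1, d2⟩ hx ⟨m', d1', d2'⟩ hx' heq
    simp only [Finset.mem_sigma, Finset.mem_product, Finset.mem_range,
      Finset.mem_finsuppAntidiag] at hx hx'
    obtain ⟨hm, ⟨hs1, hsup1⟩, hs2, hsup2⟩ := hx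
    obtain ⟨hm', ⟨hs1', hsup1'⟩, hs2', hsup2'⟩ := hx'
    have hd1 : ∀ i, i ∉ S → d1 i = 0 := fun i hiS =>
      Finsupp.notMem_support_iff.1 fun hi => hiS (hsup1 hi)
    have hd2 : ∀ i, i ∈ S → d2 i = 0 := fun i hiS =>
      Finsupp.notMem_support_iff.1 fun hi => (Finset.mem_compl.1 (hsup2 hi)) hiS
    have hd1' : ∀ i, i ∉ S → d1' i = 0 := fun i hiS =>
      Finsupp.notMem_support_iff.1 fun hi => hiS (hsup1' hi)
    have hd2' : ∀ i, i ∈ S → d2' i = 0 := fun i hiS =>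
      Finsupp.notMem_support_iff.1 fun hi => (Finset.mem_compl.1 (hsup2' hi)) hiS
    have happ : ∀ i, d1 i + d2 i = d1' i + d2' i := by
      intro i
      have := congrArg (fun f : Fin k →₀ ℕ => f i) heq
      simpa using this
    have hD1 : d1 = d1' := by
      ext i
      by_cases hiS : i ∈ S
      · have := happ i
        rw [hd2 i hiS, hd2' i hiS] at this
        omega
      · rw [hd1 i hiS, hd1' i hiS]
    have hD2 : d2 = d2' := by
      ext i
      by_cases hiS : i ∈ S
      · rw [hd2 i hiS, hd2' i hiS]
      · have := happ i
        rw [hd1 i hiS, hd1' i hiS] at this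
        omega
    have hM : m = m' := by
      rw [← hs1, ← hs1', hD1]
    subst hM hD1 hD2
    rfl
  · intro d hd
    rw [Finset.mem_finsuppAntidiag] at hd
    classical
    refine ⟨⟨∑ i ∈ S, d i, (Finsupp.filter (· ∈ S) d, Finsupp.filter (· ∉ S) d)⟩, ?_, ?_⟩
    · simp only [Finset.mem_sigma, Finset.mem_product, Finset.mem_range,
        Finset.mem_finsuppAntidiag]
      have hle : ∑ i ∈ S, d i ≤ n := by
        rw [← hd.1]
        exact Finset.sum_le_sum_of_subset (Finset.subset_univ S)
      have htot : ∑ i ∈ S, d i + ∑ i ∈ Sᶜ, d i = n := by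
        rw [← hd.1]
        exact Finset.sum_add_sum_compl S _
      refine ⟨by omega, ⟨?_, ?_⟩, ?_, ?_⟩
      · rw [Finset.sum_congr rfl (fun i hi => Finsupp.filter_apply_pos _ _ hi)]
      · intro i hi
        rw [Finsupp.support_filter, Finset.mem_filter] at hi
        exact hi.2
      · rw [Finset.sum_congr rfl
          (fun i hi => Finsupp.filter_apply_pos (· ∉ S) d (by simpa using hi))]
        omega
      · intro i hi
        rw [Finsupp.support_filter, Finset.mem_filter] at hi
        simpa using hi.2
    · ext i
      by_cases hiS : i ∈ S
      · simp [Finsupp.filter_apply, hiS]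
      · simp [Finsupp.filter_apply, hiS]
  · rintro ⟨m, d1, d2⟩ hx
    simp only [Finset.mem_sigma, Finset.mem_product, Finset.mem_range,
      Finset.mem_finsuppAntidiag] at hx
    obtain ⟨hm, ⟨hs1, hsup1⟩, hs2, hsup2⟩ := hx
    have hd1 : ∀ i, i ∉ S → d1 i = 0 := fun i hiS =>
      Finsupp.notMem_support_iff.1 fun hi => hiS (hsup1 hi)
    have hd2 : ∀ i, i ∈ S → d2 i = 0 := fun i hiS =>
      Finsupp.notMem_support_iff.1 fun hi => (Finset.mem_compl.1 (hsup2 hi)) hiS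
    have hg : ∑ i ∈ S, (d1 + d2) i = m := by
      rw [← hs1]
      apply Finset.sum_congr rfl
      intro i hi
      simp [Finsupp.add_apply, hd2 i hi]
    show (g m * ∏ i ∈ S, PowerSeries.coeff (d1 i) F) * ∏ i ∈ Sᶜ, PowerSeries.coeff (d2 i) F
        = g (∑ i ∈ S, (d1 + d2) i) * ∏ i, PowerSeries.coeff ((d1 + d2) i) F
    rw [hg, ← Finset.prod_mul_prod_compl S (fun i => PowerSeries.coeff ((d1 + d2) i) F),
      mul_assoc]
    congr 1
    congr 1
    · apply Finset.prod_congr rfl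
      intro i hi
      simp [Finsupp.add_apply, hd2 i hi]
    · apply Finset.prod_congr rfl
      intro i hi
      simp only [Finset.mem_compl] at hi
      simp [Finsupp.add_apply, hd1 i hi]

noncomputable def Wfun (k : ℕ) (τ c₀ c₁ c₂ : ℂ) (l m : ℕ) : ℂ :=
  c₀ / (c₀ + c₁ * l + c₂ * m) *
    (ff (τ - (c₀ + c₁ * l + c₂ * m)) (k - l) / ((k - l).factorial : ℂ)) *
    (ff (c₀ + c₁ * l + c₂ * m) l / (l.factorial : ℂ))

noncomputable def Tterm (n k : ℕ) (τ c₀ c₁ c₂ : ℂ) (a : ℕ → ℂ) (l m : ℕ) : ℂ :=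
  (c₀ / (c₀ + c₁ * l + c₂ * m)) *
    genChoose (τ - (c₀ + c₁ * l + c₂ * m)) ((k : ℤ) - l) *
    genChoose (c₀ + c₁ * l + c₂ * m) l *
    bellHat a m l * bellHat a (n - m) ((k : ℤ) - l)

/-- **Lemma (lem:1).** Let `n, k` be non-negative integers, `τ ∈ ℂ`, and `a = (a₁, a₂, …)`
a sequence of complex numbers.  Let `α(l,m) = c₀ + c₁·l + c₂·m` be an affine-linear
complex-valued function of `(l,m)` taking non-zero values for all `l, m ∈ {0,…,n}`
(note `α(0,0) = c₀`).  Then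
`C(τ,k)·B̂_{n,k}(a) = ∑_{m=0}^{n} ∑_{l=0}^{m} (α(0,0)/α(l,m))·C(τ−α(l,m), k−l)·
C(α(l,m), l)·B̂_{m,l}(a)·B̂_{n−m,k−l}(a)`. -/
theorem genChoose_mul_bellHat_eq_sum (n k : ℕ) (τ : ℂ) (a : ℕ → ℂ) (c₀ c₁ c₂ : ℂ)
    (hα : ∀ l m : ℕ, l ≤ n → m ≤ n → c₀ + c₁ * l + c₂ * m ≠ 0) :
    genChoose τ k * bellHat a n k =
      ∑ m ∈ Finset.range (n + 1), ∑ l ∈ Finset.range (m + 1),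
        (c₀ / (c₀ + c₁ * l + c₂ * m)) *
          genChoose (τ - (c₀ + c₁ * l + c₂ * m)) ((k : ℤ) - l) *
          genChoose (c₀ + c₁ * l + c₂ * m) l *
          bellHat a m l * bellHat a (n - m) ((k : ℤ) - l) := by
  set f : PowerSeries ℂ := PowerSeries.mk fun i => if i = 0 then 0 else a i with hf
  have hconst : PowerSeries.constantCoeff f = 0 := by
    rw [hf, ← PowerSeries.coeff_zero_eq_constantCoeff, PowerSeries.coeff_mk]
    simp
  show genChoose τ k * bellHat a n k
      = ∑ m ∈ Finset.range (n + 1), ∑ l ∈ Finset.range (m + 1), Tterm n k τ c₀ c₁ c₂ a l m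
  rcases lt_or_ge n k with hkn | hkn
  · have h0 : PowerSeries.coeff n (f ^ k) = 0 := coeff_pow_eq_zero hconst hkn
    rw [bellHat_natCast, ← hf, h0, mul_zero]
    symm
    apply Finset.sum_eq_zero
    intro m hm
    apply Finset.sum_eq_zero
    intro l hl
    rw [Finset.mem_range] at hm hl
    have h1 : bellHat a (n - m) ((k : ℤ) - l) = 0 := by
      rw [bellHat_subCast a (n - m) (show l ≤ k by omega), ← hf]
      exact coeff_pow_eq_zero hconst (by omega)
    rw [Tterm, h1, mul_zero]
  · -- main case k ≤ n
    have hterm : ∀ l m : ℕ, l ≤ k →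
        Tterm n k τ c₀ c₁ c₂ a l m
          = Wfun k τ c₀ c₁ c₂ l m * PowerSeries.coeff m (f ^ l) *
              PowerSeries.coeff (n - m) (f ^ (k - l)) := by
      intro l m hl
      rw [Tterm, Wfun, genChoose_subCast _ hl, genChoose_natCast, bellHat_natCast,
        bellHat_subCast a (n - m) hl, ← hf]
    have hR5 : ∀ l, l ≤ k →
        ∑ m ∈ Finset.range (n + 1),
            Wfun k τ c₀ c₁ c₂ l m * PowerSeries.coeff m (f ^ l) *
              PowerSeries.coeff (n - m) (f ^ (k - l))
          = (k.choose l : ℂ)⁻¹ * ∑ S ∈ Finset.powersetCard l (Finset.univ : Finset (Fin k)),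
              ∑ d ∈ Finset.finsuppAntidiag (Finset.univ : Finset (Fin k)) n,
                Wfun k τ c₀ c₁ c₂ l (∑ i ∈ S, d i) * ∏ i, PowerSeries.coeff (d i) f := by
      intro l hl
      have hcongr : ∀ S ∈ Finset.powersetCard l (Finset.univ : Finset (Fin k)),
          (∑ d ∈ Finset.finsuppAntidiag (Finset.univ : Finset (Fin k)) n,
            Wfun k τ c₀ c₁ c₂ l (∑ i ∈ S, d i) * ∏ i, PowerSeries.coeff (d i) f)
          = ∑ m ∈ Finset.range (n + 1),
              Wfun k τ c₀ c₁ c₂ l m * PowerSeries.coeff m (f ^ l) *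
                PowerSeries.coeff (n - m) (f ^ (k - l)) :=
        fun S hS => (split_sum k n l f (Wfun k τ c₀ c₁ c₂ l) S
          (Finset.mem_powersetCard.1 hS).2).symm
      rw [Finset.sum_congr rfl hcongr, Finset.sum_const, Finset.card_powersetCard,
        Finset.card_univ, Fintype.card_fin, nsmul_eq_mul,
        inv_mul_cancel_left₀ (show (k.choose l : ℂ) ≠ 0 from
          Nat.cast_ne_zero.2 (Nat.choose_pos hl).ne')]
    have chain : ∑ m ∈ Finset.range (n + 1), ∑ l ∈ Finset.range (m + 1), Tterm n k τ c₀ c₁ c₂ a l m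
        = ∑ d ∈ Finset.finsuppAntidiag (Finset.univ : Finset (Fin k)) n,
            (ff τ k / (k.factorial : ℂ)) * ∏ i, PowerSeries.coeff (d i) f := by
      calc ∑ m ∈ Finset.range (n + 1), ∑ l ∈ Finset.range (m + 1), Tterm n k τ c₀ c₁ c₂ a l m
          = ∑ m ∈ Finset.range (n + 1), ∑ l ∈ Finset.range (n + 1), Tterm n k τ c₀ c₁ c₂ a l m := by
            apply Finset.sum_congr rfl
            intro m hm
            rw [Finset.mem_range] at hm
            apply Finset.sum_subset (Finset.range_subset_range.2 (by omega))
            intro l hl hlm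
            rw [Finset.mem_range] at hl
            have hml : m < l := by
              rw [Finset.mem_range] at hlm
              omega
            rw [Tterm, bellHat_natCast, ← hf, coeff_pow_eq_zero hconst hml, mul_zero, zero_mul]
        _ = ∑ l ∈ Finset.range (n + 1), ∑ m ∈ Finset.range (n + 1), Tterm n k τ c₀ c₁ c₂ a l m :=
            Finset.sum_comm
        _ = ∑ l ∈ Finset.range (k + 1), ∑ m ∈ Finset.range (n + 1), Tterm n k τ c₀ c₁ c₂ a l m := by
            symm
            apply Finset.sum_subset (Finset.range_subset_range.2 (by omega))
            intro l hl hlk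
            rw [Finset.mem_range] at hl hlk
            apply Finset.sum_eq_zero
            intro m hm
            rw [Tterm, bellHat_negCast a (n - m) (by omega), mul_zero]
        _ = ∑ l ∈ Finset.range (k + 1), ∑ m ∈ Finset.range (n + 1),
              Wfun k τ c₀ c₁ c₂ l m * PowerSeries.coeff m (f ^ l) *
                PowerSeries.coeff (n - m) (f ^ (k - l)) := by
            apply Finset.sum_congr rfl
            intro l hl
            rw [Finset.mem_range] at hl
            exact Finset.sum_congr rfl fun m _ => hterm l m (by omega)
        _ = ∑ l ∈ Finset.range (k + 1),
              (k.choose l : ℂ)⁻¹ * ∑ S ∈ Finset.powersetCard l (Finset.univ : Finset (Fin k)),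
                ∑ d ∈ Finset.finsuppAntidiag (Finset.univ : Finset (Fin k)) n,
                  Wfun k τ c₀ c₁ c₂ l (∑ i ∈ S, d i) * ∏ i, PowerSeries.coeff (d i) f := by
            apply Finset.sum_congr rfl
            intro l hl
            rw [Finset.mem_range] at hl
            exact hR5 l (by omega)
        _ = ∑ l ∈ Finset.range (k + 1),
              ∑ S ∈ Finset.powersetCard l (Finset.univ : Finset (Fin k)),
                ∑ d ∈ Finset.finsuppAntidiag (Finset.univ : Finset (Fin k)) n,
                  (k.choose S.card : ℂ)⁻¹ *
                    (Wfun k τ c₀ c₁ c₂ S.card (∑ i ∈ S, d i) *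
                      ∏ i, PowerSeries.coeff (d i) f) := by
            apply Finset.sum_congr rfl
            intro l _
            rw [Finset.mul_sum]
            apply Finset.sum_congr rfl
            intro S hS
            have hSc : S.card = l := (Finset.mem_powersetCard.1 hS).2
            rw [hSc, Finset.mul_sum]
        _ = ∑ S ∈ (Finset.univ : Finset (Fin k)).powerset,
              ∑ d ∈ Finset.finsuppAntidiag (Finset.univ : Finset (Fin k)) n,
                (k.choose S.card : ℂ)⁻¹ *
                  (Wfun k τ c₀ c₁ c₂ S.card (∑ i ∈ S, d i) *
                    ∏ i, PowerSeries.coeff (d i) f) := by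
            rw [show Finset.range (k + 1)
                = Finset.range ((Finset.univ : Finset (Fin k)).card + 1) by simp,
              ← Finset.sum_powerset]
        _ = ∑ d ∈ Finset.finsuppAntidiag (Finset.univ : Finset (Fin k)) n,
              ∑ S ∈ (Finset.univ : Finset (Fin k)).powerset,
                (k.choose S.card : ℂ)⁻¹ *
                  (Wfun k τ c₀ c₁ c₂ S.card (∑ i ∈ S, d i) *
                    ∏ i, PowerSeries.coeff (d i) f) := Finset.sum_comm
        _ = ∑ d ∈ Finset.finsuppAntidiag (Finset.univ : Finset (Fin k)) n,
              (ff τ k / (k.factorial : ℂ)) * ∏ i, PowerSeries.coeff (d i) f := by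
            apply Finset.sum_congr rfl
            intro d hd
            rw [Finset.mem_finsuppAntidiag] at hd
            set z : Fin k → ℂ := fun i => c₁ + c₂ * ((d i : ℕ) : ℂ) with hz
            have hzS : ∀ S : Finset (Fin k),
                ∑ i ∈ S, z i = c₁ * (S.card : ℂ) + c₂ * ((∑ i ∈ S, d i : ℕ) : ℂ) := by
              intro S
              simp only [hz]
              rw [Finset.sum_add_distrib, Finset.sum_const, nsmul_eq_mul, ← Finset.mul_sum,
                Nat.cast_sum]
              ring
            have hSd : ∀ S : Finset (Fin k), (∑ i ∈ S, d i) ≤ n := by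
              intro S
              rw [← hd.1]
              exact Finset.sum_le_sum_of_subset (Finset.subset_univ S)
            have hnz : ∀ S : Finset (Fin k), c₀ + ∑ i ∈ S, z i ≠ 0 := by
              intro S
              rw [hzS S]
              intro h
              refine hα S.card (∑ i ∈ S, d i)
                (le_trans (by simpa using Finset.card_le_univ S) hkn) (hSd S) ?_
              linear_combination h
            have hH := hurwitz_final k z c₀ (τ - c₀) hnz
            rw [show c₀ + (τ - c₀) = τ from by ring] at hH
            have hper : ∀ S ∈ (Finset.univ : Finset (Fin k)).powerset,
                (k.choose S.card : ℂ)⁻¹ *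
                    (Wfun k τ c₀ c₁ c₂ S.card (∑ i ∈ S, d i) *
                      ∏ i, PowerSeries.coeff (d i) f)
                  = ((k.factorial : ℂ)⁻¹ *
                      ((c₀ / (c₀ + ∑ i ∈ S, z i)) * ff (c₀ + ∑ i ∈ S, z i) S.card *
                        ff (τ - c₀ - ∑ i ∈ S, z i) (k - S.card))) *
                      ∏ i, PowerSeries.coeff (d i) f := by
              intro S _
              have hck : S.card ≤ k := by simpa using Finset.card_le_univ S
              have hA : c₀ + c₁ * (S.card : ℂ) + c₂ * ((∑ i ∈ S, d i : ℕ) : ℂ)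
                  = c₀ + ∑ i ∈ S, z i := by rw [hzS]; ring
              have hA2 : τ - (c₀ + c₁ * (S.card : ℂ) + c₂ * ((∑ i ∈ S, d i : ℕ) : ℂ))
                  = τ - c₀ - ∑ i ∈ S, z i := by rw [hA]; ring
              rw [Wfun, hA2, hA]
              have hfact : ((k.choose S.card : ℕ) : ℂ) * ((S.card.factorial : ℕ) : ℂ) *
                  (((k - S.card).factorial : ℕ) : ℂ) = ((k.factorial : ℕ) : ℂ) := by
                exact_mod_cast congrArg (Nat.cast (R := ℂ))
                  (Nat.choose_mul_factorial_mul_factorial hck)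
              have h1 : (k.choose S.card : ℂ) ≠ 0 :=
                Nat.cast_ne_zero.2 (Nat.choose_pos hck).ne'
              have h2 : ((S.card.factorial : ℕ) : ℂ) ≠ 0 :=
                Nat.cast_ne_zero.2 (Nat.factorial_ne_zero _)
              have h3 : (((k - S.card).factorial : ℕ) : ℂ) ≠ 0 :=
                Nat.cast_ne_zero.2 (Nat.factorial_ne_zero _)
              rw [← hfact]
              field_simp
            rw [Finset.sum_congr rfl hper, ← Finset.sum_mul, ← Finset.mul_sum, hH]
            ring_nf
    rw [chain, genChoose_natCast, bellHat_natCast, ← hf]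
    have hpowk : f ^ k = ∏ _i ∈ (Finset.univ : Finset (Fin k)), f := by
      rw [Finset.prod_const, Finset.card_univ, Fintype.card_fin]
    rw [hpowk, PowerSeries.coeff_prod, Finset.mul_sum]
end

section
/- Let f = 1 + ∑_{k≥1} f_k x^k be a formal power series with complex coefficients and constant term 1. Then for every integer n ≥ 1, [x^{n−1}] f^n = ∑_{a+b=n, a≥1, b≥0} (1/a)·([x^{a−1}] f^a)·([x^b] f^b). -/
open PowerSeries Finset

lemma coeff_derivativeFun_aux (f : PowerSeries ℂ) (n : ℕ) :
    PowerSeries.coeff n (PowerSeries.derivativeFun f) = PowerSeries.coeff (n + 1) f * (n + 1) :=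
  PowerSeries.coeff_derivative f n

namespace LagrangeAux

noncomputable section

lemma coeff_pow_zero_of_lt {u : PowerSeries ℂ} (hu : PowerSeries.constantCoeff u = 0)
    {k n : ℕ} (h : n < k) : PowerSeries.coeff n (u ^ k) = 0 := by
  induction k generalizing n with
  | zero => omega
  | succ k ih =>
    rw [pow_succ, PowerSeries.coeff_mul]
    apply Finset.sum_eq_zero
    rintro ⟨a, b⟩ hab
    rw [Finset.HasAntidiagonal.mem_antidiagonal] at hab
    rcases lt_or_ge a k with hak | hak
    · rw [ih hak, zero_mul]
    · have hb : b = 0 := by omega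
      subst hb
      rw [PowerSeries.coeff_zero_eq_constantCoeff, hu, mul_zero]

lemma coeff_pow_congr {g h : PowerSeries ℂ} {N : ℕ}
    (H : ∀ i ≤ N, PowerSeries.coeff i g = PowerSeries.coeff i h) (k : ℕ) :
    ∀ i ≤ N, PowerSeries.coeff i (g ^ k) = PowerSeries.coeff i (h ^ k) := by
  induction k with
  | zero => intro i _; rfl
  | succ k ih =>
    intro i hi
    rw [pow_succ, pow_succ, PowerSeries.coeff_mul, PowerSeries.coeff_mul]
    apply Finset.sum_congr rfl
    rintro ⟨a, b⟩ hab
    rw [Finset.HasAntidiagonal.mem_antidiagonal] at hab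
    rw [ih a (by omega), H b (by omega)]

lemma coeff_mul_congr {g g' h h' : PowerSeries ℂ} {N : ℕ}
    (Hg : ∀ i ≤ N, PowerSeries.coeff i g = PowerSeries.coeff i g')
    (Hh : ∀ i ≤ N, PowerSeries.coeff i h = PowerSeries.coeff i h') :
    PowerSeries.coeff N (g * h) = PowerSeries.coeff N (g' * h') := by
  rw [PowerSeries.coeff_mul, PowerSeries.coeff_mul]
  apply Finset.sum_congr rfl
  rintro ⟨a, b⟩ hab
  rw [Finset.HasAntidiagonal.mem_antidiagonal] at hab
  rw [Hg a (by omega), Hh b (by omega)]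

lemma coeff_aeval {w : PowerSeries ℂ} (hw : PowerSeries.constantCoeff w = 0)
    (P : Polynomial ℂ) (n : ℕ) :
    PowerSeries.coeff n (Polynomial.aeval w P) =
      ∑ s ∈ range (n + 1), P.coeff s * PowerSeries.coeff n (w ^ s) := by
  have hd : P.natDegree < max (P.natDegree + 1) (n + 1) :=
    lt_of_lt_of_le (Nat.lt_succ_self _) (le_max_left _ _)
  rw [Polynomial.aeval_eq_sum_range' hd, map_sum]
  have e1 : ∀ s ∈ range (max (P.natDegree + 1) (n + 1)),
      PowerSeries.coeff n (P.coeff s • w ^ s) = P.coeff s * PowerSeries.coeff n (w ^ s) := by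
    intro s _
    rw [map_smul, smul_eq_mul]
  rw [Finset.sum_congr rfl e1]
  refine (Finset.sum_subset (Finset.range_subset_range.mpr (le_max_right _ _)) ?_).symm
  intro s _ hs
  rw [Finset.mem_range, not_lt] at hs
  rw [coeff_pow_zero_of_lt hw (by omega), mul_zero]


/-- Truncated-polynomial approximations to the Lagrange fixpoint series `S` with `X*S = X*f(X*S)`. -/
def pseq (f : PowerSeries ℂ) : ℕ → Polynomial ℂ
  | 0 => 1
  | n + 1 => pseq f n + Polynomial.C (∑ k ∈ Icc 1 (n + 1), PowerSeries.coeff k f *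
      PowerSeries.coeff (n + 1) ((PowerSeries.X * ((pseq f n : Polynomial ℂ) : PowerSeries ℂ)) ^ k))
      * Polynomial.X ^ (n + 1)

/-- The fixpoint series `S`. -/
def Sf (f : PowerSeries ℂ) : PowerSeries ℂ := PowerSeries.mk fun n => (pseq f n).coeff n

/-- `w = X * S`. -/
def wf (f : PowerSeries ℂ) : PowerSeries ℂ := PowerSeries.X * Sf f

variable (f : PowerSeries ℂ)

lemma pseq_coeff_hi : ∀ {n j : ℕ}, n < j → (pseq f n).coeff j = 0 := by
  intro n
  induction n with
  | zero =>
    intro j hj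
    rw [pseq]
    rcases j with _ | j
    · omega
    · simp [Polynomial.coeff_one]
  | succ n ih =>
    intro j hj
    rw [pseq, Polynomial.coeff_add, ih (by omega), Polynomial.coeff_C_mul,
      Polynomial.coeff_X_pow, if_neg (by omega), mul_zero, add_zero]

lemma pseq_coeff_stable {m n : ℕ} (h : m ≤ n) :
    (pseq f n).coeff m = PowerSeries.coeff m (Sf f) := by
  rw [Sf, PowerSeries.coeff_mk]
  induction n with
  | zero =>
    have : m = 0 := by omega
    subst this; rfl
  | succ n ih =>
    rcases Nat.lt_or_ge m (n + 1) with hm | hm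
    · rw [← ih (by omega)]
      rw [pseq, Polynomial.coeff_add, Polynomial.coeff_C_mul,
        Polynomial.coeff_X_pow, if_neg (by omega), mul_zero, add_zero]
    · have : m = n + 1 := by omega
      subst this; rfl

lemma constantCoeff_Sf : PowerSeries.constantCoeff (Sf f) = 1 := by
  rw [← PowerSeries.coeff_zero_eq_constantCoeff_apply, Sf, PowerSeries.coeff_mk, pseq]
  simp

lemma constantCoeff_wf : PowerSeries.constantCoeff (wf f) = 0 := by
  rw [wf, map_mul, PowerSeries.constantCoeff_X, zero_mul]

lemma coeff_wf_succ (n : ℕ) :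
    PowerSeries.coeff (n + 1) (wf f) = PowerSeries.coeff n (Sf f) :=
  PowerSeries.coeff_succ_X_mul n (Sf f)

lemma pseq_agree (n : ℕ) : ∀ i ≤ n + 1,
    PowerSeries.coeff i (PowerSeries.X * ((pseq f n : Polynomial ℂ) : PowerSeries ℂ)) =
      PowerSeries.coeff i (wf f) := by
  intro i hi
  rcases i with _ | j
  · rw [PowerSeries.coeff_zero_eq_constantCoeff, map_mul, PowerSeries.constantCoeff_X,
      zero_mul, constantCoeff_wf]
  · rw [PowerSeries.coeff_succ_X_mul, coeff_wf_succ, Polynomial.coeff_coe,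
      pseq_coeff_stable f (by omega)]

/-- The evaluation map `g ↦ g(w)`. -/
def Phi (g : PowerSeries ℂ) : PowerSeries ℂ :=
  PowerSeries.mk fun n => ∑ s ∈ range (n + 1),
    PowerSeries.coeff s g * PowerSeries.coeff n (wf f ^ s)

lemma coeff_Phi (g : PowerSeries ℂ) (n : ℕ) :
    PowerSeries.coeff n (Phi f g) = ∑ s ∈ range (n + 1),
      PowerSeries.coeff s g * PowerSeries.coeff n (wf f ^ s) :=
  PowerSeries.coeff_mk n _

lemma coeff_Phi_trunc (g : PowerSeries ℂ) {n N : ℕ} (h : n < N) :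
    PowerSeries.coeff n (Phi f g) =
      PowerSeries.coeff n (Polynomial.aeval (wf f) (PowerSeries.trunc N g)) := by
  rw [coeff_Phi, coeff_aeval (constantCoeff_wf f)]
  apply Finset.sum_congr rfl
  intro s hs
  rw [Finset.mem_range] at hs
  rw [PowerSeries.coeff_trunc, if_pos (by omega)]

lemma Phi_coe (P : Polynomial ℂ) :
    Phi f (P : PowerSeries ℂ) = Polynomial.aeval (wf f) P := by
  ext n
  rw [coeff_Phi, coeff_aeval (constantCoeff_wf f)]
  apply Finset.sum_congr rfl
  intro s _
  rw [Polynomial.coeff_coe]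

lemma Phi_mul (g h : PowerSeries ℂ) : Phi f (g * h) = Phi f g * Phi f h := by
  ext n
  set P := PowerSeries.trunc (n + 1) g with hP
  set Q := PowerSeries.trunc (n + 1) h with hQ
  have h2 : PowerSeries.coeff n (Phi f g * Phi f h) =
      PowerSeries.coeff n (Polynomial.aeval (wf f) P * Polynomial.aeval (wf f) Q) := by
    apply coeff_mul_congr
    · intro i hi
      exact coeff_Phi_trunc f g (by omega)
    · intro i hi
      exact coeff_Phi_trunc f h (by omega)
  rw [h2, ← map_mul, coeff_aeval (constantCoeff_wf f), coeff_Phi]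
  apply Finset.sum_congr rfl
  intro s hs
  rw [Finset.mem_range] at hs
  congr 1
  rw [Polynomial.coeff_mul, PowerSeries.coeff_mul]
  apply Finset.sum_congr rfl
  rintro ⟨a, b⟩ hab
  rw [Finset.HasAntidiagonal.mem_antidiagonal] at hab
  rw [hP, hQ, PowerSeries.coeff_trunc, PowerSeries.coeff_trunc,
    if_pos (by omega : a < n + 1), if_pos (by omega : b < n + 1)]

lemma Phi_one : Phi f 1 = 1 := by
  ext n
  rw [coeff_Phi]
  rw [Finset.sum_eq_single 0]
  · rw [pow_zero]
    simp
  · intro s _ hs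
    rw [PowerSeries.coeff_one, if_neg hs, zero_mul]
  · intro h
    exact absurd (Finset.mem_range.mpr (by omega)) h

lemma Phi_X : Phi f PowerSeries.X = wf f := by
  ext n
  rw [coeff_Phi]
  rcases n with _ | m
  · rw [Finset.sum_eq_single 0]
    · simp [constantCoeff_wf, PowerSeries.coeff_zero_eq_constantCoeff]
    · intro s _ hs
      rw [coeff_pow_zero_of_lt (constantCoeff_wf f) (by omega), mul_zero]
    · intro h
      exact absurd (Finset.mem_range.mpr (by omega)) h
  · rw [Finset.sum_eq_single 1]
    · rw [PowerSeries.coeff_X, if_pos rfl, one_mul, pow_one]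
    · intro s _ hs
      rw [PowerSeries.coeff_X, if_neg hs, zero_mul]
    · intro h
      exact absurd (Finset.mem_range.mpr (by omega)) h

lemma Phi_pow (g : PowerSeries ℂ) (m : ℕ) : Phi f (g ^ m) = Phi f g ^ m := by
  induction m with
  | zero => rw [pow_zero, pow_zero, Phi_one]
  | succ m ih => rw [pow_succ, pow_succ, Phi_mul, ih]


lemma Phi_f_fix (hf : PowerSeries.constantCoeff f = 1) : Phi f f = Sf f := by
  ext n
  rcases n with _ | n
  · rw [coeff_Phi]
    rw [Finset.sum_eq_single 0]
    · simp only [pow_zero, PowerSeries.coeff_zero_eq_constantCoeff, map_one, mul_one]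
      rw [hf, constantCoeff_Sf]
    · intro s _ hs
      exact absurd (Finset.mem_range.mp ‹s ∈ range 1›) (by omega)
    · intro h
      exact absurd (Finset.mem_range.mpr (by omega)) h
  · -- coefficient n+1
    have hset : range (n + 2) = insert 0 (Icc 1 (n + 1)) := by
      ext x
      simp only [Finset.mem_range, Finset.mem_insert, Finset.mem_Icc]
      omega
    rw [coeff_Phi, hset, Finset.sum_insert (by simp)]
    have h0 : PowerSeries.coeff 0 f * PowerSeries.coeff (n + 1) (wf f ^ 0) = 0 := by
      rw [pow_zero, PowerSeries.coeff_one, if_neg (by omega), mul_zero]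
    rw [h0, zero_add]
    have hrhs : PowerSeries.coeff (n + 1) (Sf f) =
        ∑ k ∈ Icc 1 (n + 1), PowerSeries.coeff k f *
          PowerSeries.coeff (n + 1)
            ((PowerSeries.X * ((pseq f n : Polynomial ℂ) : PowerSeries ℂ)) ^ k) := by
      rw [Sf, PowerSeries.coeff_mk, pseq, Polynomial.coeff_add, pseq_coeff_hi f (by omega),
        zero_add, Polynomial.coeff_C_mul, Polynomial.coeff_X_pow, if_pos rfl, mul_one]
    rw [hrhs]
    apply Finset.sum_congr rfl
    intro k _
    congr 1
    exact (coeff_pow_congr (pseq_agree f n) k (n + 1) le_rfl).symm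


lemma Phi_add (g h : PowerSeries ℂ) : Phi f (g + h) = Phi f g + Phi f h := by
  ext n
  rw [map_add, coeff_Phi, coeff_Phi, coeff_Phi, ← Finset.sum_add_distrib]
  apply Finset.sum_congr rfl
  intro s _
  rw [map_add, add_mul]

lemma derivativeFun_X : PowerSeries.derivativeFun (PowerSeries.X : PowerSeries ℂ) = 1 := by
  ext n
  rw [coeff_derivativeFun_aux]
  rcases n with _ | n
  · simp
  · rw [PowerSeries.coeff_X, if_neg (by omega), PowerSeries.coeff_one, if_neg (by omega), zero_mul]

lemma dw_eq : PowerSeries.derivativeFun (wf f) =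
    Sf f + PowerSeries.X * PowerSeries.derivativeFun (Sf f) := by
  rw [wf, PowerSeries.derivativeFun_mul, derivativeFun_X, smul_eq_mul, smul_eq_mul, mul_one,
    add_comm]

lemma dpow (g : PowerSeries ℂ) (m : ℕ) :
    PowerSeries.derivativeFun (g ^ (m + 1)) =
      PowerSeries.C ((m : ℂ) + 1) * (g ^ m * PowerSeries.derivativeFun g) := by
  induction m with
  | zero => simp
  | succ m ih =>
    rw [pow_succ, PowerSeries.derivativeFun_mul, ih, smul_eq_mul, smul_eq_mul]
    have hc : PowerSeries.C ((m : ℂ) + 1 + 1) = PowerSeries.C ((m : ℂ) + 1) + 1 := by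
      rw [map_add, map_one]
    push_cast
    rw [hc]
    ring

/-- `u := S⁻¹`. -/
def uf : PowerSeries ℂ := (Sf f)⁻¹

lemma Su : Sf f * uf f = 1 :=
  PowerSeries.mul_inv_cancel _ (by rw [constantCoeff_Sf]; exact one_ne_zero)

lemma uS_pow (j : ℕ) : uf f ^ j * Sf f ^ j = 1 := by
  rw [← mul_pow, mul_comm, Su, one_pow]

lemma key_one : PowerSeries.coeff 0 (uf f * PowerSeries.derivativeFun (wf f)) = 1 := by
  rw [PowerSeries.coeff_mul]
  rw [Finset.Nat.sum_antidiagonal_eq_sum_range_succ_mk]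
  rw [Finset.sum_range_one]
  have h1 : PowerSeries.coeff 0 (uf f) = 1 := by
    rw [PowerSeries.coeff_zero_eq_constantCoeff, uf, PowerSeries.constantCoeff_inv,
      constantCoeff_Sf, inv_one]
  have h2 : PowerSeries.coeff 0 (PowerSeries.derivativeFun (wf f)) = 1 := by
    rw [coeff_derivativeFun_aux, coeff_wf_succ,
      PowerSeries.coeff_zero_eq_constantCoeff, constantCoeff_Sf]
    norm_num
  rw [h1, h2, one_mul]

lemma u_dS : uf f * PowerSeries.derivativeFun (Sf f) =
    -(Sf f * PowerSeries.derivativeFun (uf f)) := by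
  have h : PowerSeries.derivativeFun (Sf f * uf f) = 0 := by
    rw [Su, PowerSeries.derivativeFun_one]
  rw [PowerSeries.derivativeFun_mul, smul_eq_mul, smul_eq_mul] at h
  linear_combination h

lemma key_two {i : ℕ} (hi : 2 ≤ i) :
    PowerSeries.coeff (i - 1) (uf f ^ i * PowerSeries.derivativeFun (wf f)) = 0 := by
  obtain ⟨j, rfl⟩ : ∃ j, i = j + 2 := ⟨i - 2, by omega⟩
  set u := uf f
  set S := Sf f
  set du := PowerSeries.derivativeFun u with hdu
  have e1 : u ^ (j + 2) * PowerSeries.derivativeFun (wf f)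
      = u ^ (j + 1) - PowerSeries.X * (u ^ j * du) := by
    rw [dw_eq]
    have eS : u ^ (j + 2) * S = u ^ (j + 1) := by
      calc u ^ (j + 2) * S = u ^ (j + 1) * (S * u) := by ring
      _ = u ^ (j + 1) := by rw [Su, mul_one]
    have edS : u ^ (j + 2) * PowerSeries.derivativeFun S = -(u ^ j * du) := by
      calc u ^ (j + 2) * PowerSeries.derivativeFun S
          = u ^ (j + 1) * (u * PowerSeries.derivativeFun S) := by ring
      _ = u ^ (j + 1) * (-(S * du)) := by rw [u_dS]
      _ = -((u ^ (j + 1) * S) * du) := by ring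
      _ = -(u ^ j * du) := by
            rw [show u ^ (j + 1) * S = u ^ j * (S * u) by ring, Su, mul_one]
    calc u ^ (j + 2) * (S + PowerSeries.X * PowerSeries.derivativeFun S)
        = u ^ (j + 2) * S + PowerSeries.X * (u ^ (j + 2) * PowerSeries.derivativeFun S) := by ring
    _ = u ^ (j + 1) - PowerSeries.X * (u ^ j * du) := by rw [eS, edS]; ring
  rw [show j + 2 - 1 = j + 1 by omega, e1, map_sub, PowerSeries.coeff_succ_X_mul]
  have hA : PowerSeries.coeff j (u ^ j * du) = PowerSeries.coeff (j + 1) (u ^ (j + 1)) := by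
    have hd : PowerSeries.derivativeFun (u ^ (j + 1)) =
        PowerSeries.C ((j : ℂ) + 1) * (u ^ j * du) := dpow u j
    have hcoeff := congrArg (PowerSeries.coeff j) hd
    rw [coeff_derivativeFun_aux, PowerSeries.coeff_C_mul] at hcoeff
    have hne : ((j : ℂ) + 1) ≠ 0 := by
      have : ((j + 1 : ℕ) : ℂ) ≠ 0 := Nat.cast_ne_zero.mpr (Nat.succ_ne_zero j)
      push_cast at this
      exact this
    exact mul_left_cancel₀ hne (by linear_combination -hcoeff)
  rw [hA, sub_self]

lemma main_res (g : PowerSeries ℂ) (m : ℕ) :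
    PowerSeries.coeff m (uf f ^ (m + 1) * Phi f g * PowerSeries.derivativeFun (wf f)) =
      PowerSeries.coeff m g := by
  classical
  set u := uf f with hu
  set S := Sf f with hS
  set w := wf f with hw
  set dw := PowerSeries.derivativeFun w with hdw
  set P := PowerSeries.trunc (m + 1) g with hP
  set t := PowerSeries.mk (fun i => PowerSeries.coeff (m + 1 + i) g) with ht
  have hdec : g = (P : PowerSeries ℂ) + PowerSeries.X ^ (m + 1) * t := by
    ext i
    rw [map_add, Polynomial.coeff_coe, hP, PowerSeries.coeff_trunc,
      PowerSeries.coeff_X_pow_mul']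
    by_cases hi : i < m + 1
    · rw [if_pos hi, if_neg (by omega), add_zero]
    · rw [if_neg hi, if_pos (by omega), zero_add, ht, PowerSeries.coeff_mk,
        show m + 1 + (i - (m + 1)) = i by omega]
  have hPhi : Phi f g = Polynomial.aeval w P + w ^ (m + 1) * Phi f t := by
    conv_lhs => rw [hdec]
    rw [Phi_add, Phi_coe, Phi_mul, Phi_pow, Phi_X]
  rw [hPhi, mul_add, add_mul, map_add]
  have htail : PowerSeries.coeff m (u ^ (m + 1) * (w ^ (m + 1) * Phi f t) * dw) = 0 := by
    have e : u ^ (m + 1) * (w ^ (m + 1) * Phi f t) * dw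
        = PowerSeries.X ^ (m + 1) * (Phi f t * dw) := by
      calc u ^ (m + 1) * (w ^ (m + 1) * Phi f t) * dw
          = (u ^ (m + 1) * S ^ (m + 1)) * (PowerSeries.X ^ (m + 1) * (Phi f t * dw)) := by
            rw [hw, wf]; ring
      _ = PowerSeries.X ^ (m + 1) * (Phi f t * dw) := by rw [hu, hS, uS_pow, one_mul]
    rw [e, PowerSeries.coeff_X_pow_mul', if_neg (by omega)]
  rw [htail, add_zero]
  have hdeg : P.natDegree < m + 1 := PowerSeries.natDegree_trunc_lt g m
  rw [Polynomial.aeval_eq_sum_range' hdeg]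
  rw [Finset.mul_sum, Finset.sum_mul, map_sum]
  have hterm : ∀ j ∈ range (m + 1),
      PowerSeries.coeff m (u ^ (m + 1) * (P.coeff j • w ^ j) * dw)
        = if j = m then P.coeff j else 0 := by
    intro j hj
    rw [Finset.mem_range] at hj
    obtain ⟨d, hd⟩ : ∃ d, m + 1 = d + j := ⟨m + 1 - j, by omega⟩
    have hd1 : 1 ≤ d := by omega
    have e : u ^ (m + 1) * (P.coeff j • w ^ j) * dw
        = P.coeff j • (PowerSeries.X ^ j * (u ^ d * dw)) := by
      calc u ^ (m + 1) * (P.coeff j • w ^ j) * dw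
          = P.coeff j • (u ^ (m + 1) * w ^ j * dw) := by
            rw [mul_smul_comm, smul_mul_assoc]
      _ = P.coeff j • ((u ^ j * S ^ j) * (PowerSeries.X ^ j * (u ^ d * dw))) := by
            rw [hd, hw, wf, ← hS]
            congr 1
            ring
      _ = P.coeff j • (PowerSeries.X ^ j * (u ^ d * dw)) := by rw [hu, hS, uS_pow, one_mul]
    rw [e, map_smul, smul_eq_mul, PowerSeries.coeff_X_pow_mul', if_pos (by omega)]
    rcases eq_or_lt_of_le hd1 with hd2 | hd2
    · -- d = 1, j = m
      have hjm : j = m := by omega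
      have : m - j = 0 := by omega
      rw [this, ← hd2, pow_one, hu, key_one, mul_one, if_pos hjm]
    · -- d ≥ 2, j < m
      have hjm : ¬ (j = m) := by omega
      have hmj : m - j = d - 1 := by omega
      rw [hmj, hu, key_two (f := f) hd2, mul_zero, if_neg hjm]
  rw [Finset.sum_congr rfl hterm, Finset.sum_ite_eq' (range (m + 1)) m (fun j => P.coeff j),
    if_pos (Finset.mem_range.mpr (by omega)), hP, PowerSeries.coeff_trunc, if_pos (by omega)]

lemma L1 (hf : PowerSeries.constantCoeff f = 1) (m : ℕ) :
    PowerSeries.coeff m (f ^ (m + 1)) =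
      PowerSeries.coeff (m + 1) (wf f) * (m + 1 : ℂ) := by
  have h := main_res f (f ^ (m + 1)) m
  rw [Phi_pow, Phi_f_fix f hf] at h
  rw [uS_pow, one_mul] at h
  rw [← h, coeff_derivativeFun_aux]


lemma L2 (hf : PowerSeries.constantCoeff f = 1) (b : ℕ) :
    PowerSeries.coeff b (f ^ b) =
      PowerSeries.coeff b (uf f * PowerSeries.derivativeFun (wf f)) := by
  have h := main_res f (f ^ b) b
  rw [Phi_pow, Phi_f_fix f hf] at h
  have e : uf f ^ (b + 1) * Sf f ^ b = uf f := by
    calc uf f ^ (b + 1) * Sf f ^ b = uf f * (uf f ^ b * Sf f ^ b) := by ring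
    _ = uf f := by rw [uS_pow, mul_one]
  rw [e] at h
  exact h.symm

end

end LagrangeAux


/-- **Lemma (lem:2).** For a formal power series `f = 1 + ∑_{k≥1} f_k x^k` with complex
coefficients and constant term `1`, and every integer `n ≥ 1`,
`[x^{n−1}] f^n = ∑_{a+b=n, a≥1, b≥0} (1/a)·([x^{a−1}] f^a)·([x^b] f^b)`. -/
theorem coeff_pow_eq_sum_div (f : PowerSeries ℂ)
    (hf : PowerSeries.constantCoeff f = 1) (n : ℕ) (hn : 1 ≤ n) :
    PowerSeries.coeff (n - 1) (f ^ n) =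
      ∑ a ∈ Finset.Icc 1 n,
        (a : ℂ)⁻¹ * PowerSeries.coeff (a - 1) (f ^ a) *
          PowerSeries.coeff (n - a) (f ^ (n - a)) := by
  classical
  obtain ⟨m, rfl⟩ : ∃ m, n = m + 1 := ⟨n - 1, by omega⟩
  set w := LagrangeAux.wf f with hw
  set u := LagrangeAux.uf f with hu
  set dw := PowerSeries.derivativeFun w with hdw
  have hsum : ∀ a ∈ Finset.Icc 1 (m + 1),
      (a : ℂ)⁻¹ * PowerSeries.coeff (a - 1) (f ^ a) *
          PowerSeries.coeff (m + 1 - a) (f ^ (m + 1 - a))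
        = PowerSeries.coeff a w * PowerSeries.coeff (m + 1 - a) (u * dw) := by
    intro a ha
    rw [Finset.mem_Icc] at ha
    obtain ⟨b, rfl⟩ : ∃ b, a = b + 1 := ⟨a - 1, by omega⟩
    rw [show b + 1 - 1 = b by omega, LagrangeAux.L1 f hf b,
      ← LagrangeAux.L2 f hf (m + 1 - (b + 1))]
    have hb : ((b : ℂ) + 1) ≠ 0 := by
      have : ((b + 1 : ℕ) : ℂ) ≠ 0 := Nat.cast_ne_zero.mpr (Nat.succ_ne_zero b)
      push_cast at this
      exact this
    push_cast
    field_simp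
    rw [hw]; ring
  rw [Finset.sum_congr rfl hsum]
  have hset : Finset.range (m + 2) = insert 0 (Finset.Icc 1 (m + 1)) := by
    ext x
    simp only [Finset.mem_range, Finset.mem_insert, Finset.mem_Icc]
    omega
  have hz : PowerSeries.coeff 0 w = 0 := by
    rw [PowerSeries.coeff_zero_eq_constantCoeff, hw]
    exact LagrangeAux.constantCoeff_wf f
  have hmul : PowerSeries.coeff (m + 1) (w * (u * dw))
      = ∑ a ∈ Finset.Icc 1 (m + 1),
          PowerSeries.coeff a w * PowerSeries.coeff (m + 1 - a) (u * dw) := by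
    rw [PowerSeries.coeff_mul, Finset.Nat.sum_antidiagonal_eq_sum_range_succ_mk, hset,
      Finset.sum_insert (by simp), hz, zero_mul, zero_add]
  rw [← hmul]
  have hXdw : w * (u * dw) = PowerSeries.X * dw := by
    rw [hw, hu, LagrangeAux.wf]
    calc PowerSeries.X * LagrangeAux.Sf f * (LagrangeAux.uf f * dw)
        = PowerSeries.X * ((LagrangeAux.Sf f * LagrangeAux.uf f) * dw) := by ring
    _ = PowerSeries.X * dw := by rw [LagrangeAux.Su, one_mul]
  rw [hXdw, PowerSeries.coeff_succ_X_mul, show m + 1 - 1 = m by omega, hdw,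
    coeff_derivativeFun_aux]
  exact LagrangeAux.L1 f hf m
end
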